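/- arXiv:2102.06933 — 10 statements merged into one kernel-verified Lean document; each statement's English description precedes it below -/
import Mathlib

section
/- Suppose each f_t : X → ℝ (t = 1,…,T) is nonnegative and α-polyhedral with minimizer v_t, and the learner plays x_t = v_t (the minimizer of f_t) with x_0 = u_0. Then for any comparator sequence u_0, u_1, …, u_T ∈ X: Σ_{t=1}^T (f_t(x_t) + ‖x_t - x_{t-1}‖) ≤ max(1, 2/α) · Σ_{t=1}^T (f_t(u_t) + ‖u_t - u_{t-1}‖). -/
open Finset in
theorem stmt_2 {d : ℕ} (T : ℕ) (X : Set (EuclideanSpace ℝ (Fin d)))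
    (f : ℕ → EuclideanSpace ℝ (Fin d) → ℝ)
    (v x u : ℕ → EuclideanSpace ℝ (Fin d))
    (α : ℝ) (hα : 0 < α)
    (hu : ∀ t ≤ T, u t ∈ X)
    (hvX : ∀ t ∈ Icc 1 T, v t ∈ X)
    (hnonneg : ∀ t ∈ Icc 1 T, ∀ y ∈ X, 0 ≤ f t y)
    (hmin : ∀ t ∈ Icc 1 T, ∀ y ∈ X, f t (v t) ≤ f t y)
    (hpoly : ∀ t ∈ Icc 1 T, ∀ y ∈ X, f t y - f t (v t) ≥ α * ‖y - v t‖)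
    (hx : ∀ t ∈ Icc 1 T, x t = v t)
    (hx0 : x 0 = u 0) :
    ∑ t ∈ Icc 1 T, (f t (x t) + ‖x t - x (t - 1)‖) ≤
      max 1 (2 / α) * ∑ t ∈ Icc 1 T, (f t (u t) + ‖u t - u (t - 1)‖) := by
  set c : ℝ := max 1 (2 / α) with hc
  have hc1 : (1 : ℝ) ≤ c := le_max_left _ _
  set g : ℕ → ℝ := fun t => ‖u t - x t‖ with hg
  have hg0 : g 0 = 0 := by simp [hg, hx0]
  have hgnn : ∀ t, 0 ≤ g t := fun t => norm_nonneg _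
  -- key per-round bound
  have key : ∀ t ∈ Icc 1 T, f t (v t) + 2 * g t ≤ c * f t (u t) := by
    intro t ht
    have htT : t ≤ T := (mem_Icc.mp ht).2
    have huX := hu t htT
    have hA : 0 ≤ f t (v t) := hnonneg t ht _ (hvX t ht)
    have hN : g t = ‖u t - v t‖ := by simp only [hg, hx t ht]
    have hP : f t (u t) - f t (v t) ≥ α * ‖u t - v t‖ := hpoly t ht _ huX
    rw [hN]
    have hNn : (0:ℝ) ≤ ‖u t - v t‖ := norm_nonneg _
    rcases le_or_gt α 2 with h2 | h2
    · have hcval : c = 2 / α := by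
        rw [hc, max_eq_right]
        rw [le_div_iff₀ hα]; linarith
      rw [hcval, div_mul_eq_mul_div, le_div_iff₀ hα]
      nlinarith
    · have h1 : α * ‖u t - v t‖ ≥ 2 * ‖u t - v t‖ := by nlinarith
      nlinarith
  -- shift sum inequality
  have shift : ∑ t ∈ Icc 1 T, g (t - 1) ≤ ∑ t ∈ Icc 1 T, g t := by
    have h1 : ∀ N : ℕ, ∑ t ∈ Icc 1 N, g (t - 1) = ∑ i ∈ Finset.range N, g i := by
      intro N
      rw [← Finset.Ico_add_one_right_eq_Icc, Finset.sum_Ico_eq_sum_range]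
      simp
    have h2 : ∀ N : ℕ, ∑ t ∈ Icc 1 N, g t = ∑ i ∈ Finset.range N, g (i + 1) := by
      intro N
      rw [← Finset.Ico_add_one_right_eq_Icc, Finset.sum_Ico_eq_sum_range]
      simp [add_comm]
    rw [h1, h2]
    cases T with
    | zero => simp
    | succ S =>
        rw [Finset.sum_range_succ', Finset.sum_range_succ]
        rw [hg0]
        have := hgnn (S + 1)
        linarith
  calc ∑ t ∈ Icc 1 T, (f t (x t) + ‖x t - x (t - 1)‖)
      ≤ ∑ t ∈ Icc 1 T, (f t (v t) + (g t + ‖u t - u (t - 1)‖ + g (t - 1))) := by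
        apply Finset.sum_le_sum
        intro t ht
        rw [hx t ht]
        have htri : ‖x t - x (t - 1)‖ ≤ ‖x t - u t‖ + ‖u t - u (t - 1)‖ + ‖u (t - 1) - x (t - 1)‖ := by
          have := norm_sub_le_norm_sub_add_norm_sub (x t) (u t) (x (t - 1))
          have := norm_sub_le_norm_sub_add_norm_sub (u t) (u (t - 1)) (x (t - 1))
          linarith
        have hgt : ‖x t - u t‖ = g t := by simp only [hg]; exact norm_sub_rev _ _
        rw [hx t ht] at htri hgt
        linarith [htri, hgt.ge, hgt.le]
    _ = (∑ t ∈ Icc 1 T, (f t (v t) + g t + ‖u t - u (t - 1)‖)) + ∑ t ∈ Icc 1 T, g (t - 1) := by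
        rw [← Finset.sum_add_distrib]
        exact Finset.sum_congr rfl fun t _ => by ring
    _ ≤ (∑ t ∈ Icc 1 T, (f t (v t) + g t + ‖u t - u (t - 1)‖)) + ∑ t ∈ Icc 1 T, g t := by
        linarith [shift]
    _ = ∑ t ∈ Icc 1 T, (f t (v t) + 2 * g t + ‖u t - u (t - 1)‖) := by
        rw [← Finset.sum_add_distrib]
        exact Finset.sum_congr rfl fun t _ => by ring
    _ ≤ ∑ t ∈ Icc 1 T, (c * (f t (u t) + ‖u t - u (t - 1)‖)) := by
        apply Finset.sum_le_sum
        intro t ht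
        have := key t ht
        have hn : (0:ℝ) ≤ ‖u t - u (t - 1)‖ := norm_nonneg _
        nlinarith [hc1]
    _ = c * ∑ t ∈ Icc 1 T, (f t (u t) + ‖u t - u (t - 1)‖) := by
        rw [Finset.mul_sum]
end

section
/- Suppose each f_t : X → ℝ (t = 1,…,T) is nonnegative and λ-quadratic growth with minimizer v_t, i.e., f_t(x) - f_t(v_t) ≥ (λ/2)‖x - v_t‖² for all x ∈ X, and the learner plays x_t = v_t with x_0 = u_0. Then for any u_0, u_1, …, u_T ∈ X: Σ_{t=1}^T (f_t(x_t) + ½‖x_t - x_{t-1}‖²) ≤ (1 + 4/λ) · Σ_{t=1}^T (f_t(u_t) + ½‖u_t - u_{t-1}‖²). -/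
lemma cauchy3 (lam a b c : ℝ) (hlam : 0 < lam) :
    lam*(a+b+c)^2 ≤ lam*(lam+4)/2*a^2 + (lam+4)*b^2 + lam*(lam+4)/2*c^2 := by
  nlinarith [sq_nonneg (lam*(a-c)), sq_nonneg (lam*(a+c)-4*b), sq_nonneg (a-c), sq_nonneg (a+c-2*b), mul_pos hlam hlam]

lemma step (lam fv fu a b c n : ℝ) (hlam : 0 < lam) (ha : 0 ≤ a) (hb : 0 ≤ b)
    (hc : 0 ≤ c) (hn : 0 ≤ n) (hnabc : n ≤ a + b + c)
    (hfv : 0 ≤ fv) (hqg : fu - fv ≥ lam/2 * a^2) :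
    fv + 1/2*n^2 ≤ (1+4/lam)*(fu + 1/2*b^2) + ((lam+4)/4*c^2 - (lam+4)/4*a^2) := by
  have h1 : n^2 ≤ (a+b+c)^2 := by nlinarith
  have h2 := cauchy3 lam a b c hlam
  have h3 : (1+4/lam) = (lam+4)/lam := by field_simp
  rw [h3, ← mul_le_mul_iff_right₀ hlam]
  have e1 : lam * ((lam+4)/lam*(fu + 1/2*b^2) + ((lam+4)/4*c^2 - (lam+4)/4*a^2))
      = (lam+4)*(fu + 1/2*b^2) + lam*((lam+4)/4*c^2 - (lam+4)/4*a^2) := by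
    field_simp
  rw [e1]
  nlinarith [mul_le_mul_of_nonneg_left h1 hlam.le,
    mul_le_mul_of_nonneg_left hqg (by linarith : (0:ℝ) ≤ lam + 4),
    mul_nonneg hlam.le hfv, hfv]

open Finset in
theorem stmt_3 {d : ℕ} (T : ℕ) (X : Set (EuclideanSpace ℝ (Fin d)))
    (f : ℕ → EuclideanSpace ℝ (Fin d) → ℝ)
    (v x u : ℕ → EuclideanSpace ℝ (Fin d))
    (lam : ℝ) (hlam : 0 < lam)
    (hu : ∀ t ≤ T, u t ∈ X)
    (hvX : ∀ t ∈ Icc 1 T, v t ∈ X)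
    (hnonneg : ∀ t ∈ Icc 1 T, ∀ y ∈ X, 0 ≤ f t y)
    (hmin : ∀ t ∈ Icc 1 T, ∀ y ∈ X, f t (v t) ≤ f t y)
    (hqg : ∀ t ∈ Icc 1 T, ∀ y ∈ X, f t y - f t (v t) ≥ lam / 2 * ‖y - v t‖ ^ 2)
    (hx : ∀ t ∈ Icc 1 T, x t = v t)
    (hx0 : x 0 = u 0) :
    ∑ t ∈ Icc 1 T, (f t (x t) + 1 / 2 * ‖x t - x (t - 1)‖ ^ 2) ≤
      (1 + 4 / lam) * ∑ t ∈ Icc 1 T, (f t (u t) + 1 / 2 * ‖u t - u (t - 1)‖ ^ 2) := by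
  set D : ℕ → ℝ := fun t => if t = 0 then 0 else (lam+4)/4 * ‖u t - v t‖^2 with hD
  have htel : ∀ n : ℕ, ∑ t ∈ Icc 1 n, (D (t-1) - D t) = D 0 - D n := by
    intro n
    induction n with
    | zero => simp
    | succ m ih =>
      rw [Finset.sum_Icc_succ_top (by omega : 1 ≤ m + 1), ih]
      simp
  have key : ∀ t ∈ Icc 1 T, f t (x t) + 1/2*‖x t - x (t-1)‖^2 ≤
      (1+4/lam)*(f t (u t) + 1/2*‖u t - u (t-1)‖^2) + (D (t-1) - D t) := by
    intro t ht
    obtain ⟨ht1, htT⟩ := mem_Icc.mp ht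
    rw [hx t ht]
    set a := ‖u t - v t‖ with hadef
    set b := ‖u t - u (t-1)‖ with hbdef
    have huX : u t ∈ X := hu t htT
    have huX' : u (t-1) ∈ X := hu (t-1) (by omega)
    have hfv : 0 ≤ f t (v t) := hnonneg t ht (v t) (hvX t ht)
    have hqgt : f t (u t) - f t (v t) ≥ lam/2 * a^2 := by
      have := hqg t ht (u t) huX
      simpa [hadef] using this
    have hDt : D t = (lam+4)/4 * a^2 := by simp only [hD, hadef]; rw [if_neg (by omega)]
    by_cases h1 : t = 1
    · -- t = 1 : x (t-1) = x 0 = u 0 = u (t-1), c = 0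
      subst h1
      have hx0' : x 0 = u 0 := hx0
      have hD0 : D 0 = 0 := by simp [hD]
      have htri : ‖v 1 - x 0‖ ≤ a + b + 0 := by
        rw [hx0']
        calc ‖v 1 - u 0‖ ≤ ‖v 1 - u 1‖ + ‖u 1 - u 0‖ := norm_sub_le_norm_sub_add_norm_sub _ _ _
          _ = a + b + 0 := by rw [norm_sub_rev]; simp [hadef, hbdef]
      have := step lam (f 1 (v 1)) (f 1 (u 1)) a b 0 (‖v 1 - x 0‖) hlam
        (norm_nonneg _) (norm_nonneg _) le_rfl (norm_nonneg _) htri hfv hqgt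
      simp only [hD0, hDt] at *
      calc f 1 (v 1) + 1/2*‖v 1 - x (1-1)‖^2 = f 1 (v 1) + 1/2*‖v 1 - x 0‖^2 := by norm_num
        _ ≤ (1+4/lam)*(f 1 (u 1) + 1/2*b^2) + ((lam+4)/4*0^2 - (lam+4)/4*a^2) := this
        _ = (1+4/lam)*(f 1 (u 1) + 1/2*b^2) + (0 - (lam+4)/4*a^2) := by ring
    · -- t ≥ 2
      have ht2 : 2 ≤ t := by omega
      have htm : t - 1 ∈ Icc 1 T := mem_Icc.mpr ⟨by omega, by omega⟩
      have hxm : x (t-1) = v (t-1) := hx (t-1) htm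
      set c := ‖u (t-1) - v (t-1)‖ with hcdef
      have hDtm : D (t-1) = (lam+4)/4 * c^2 := by
        simp only [hD, hcdef]; rw [if_neg (by omega)]
      have htri : ‖v t - x (t-1)‖ ≤ a + b + c := by
        rw [hxm]
        calc ‖v t - v (t-1)‖ ≤ ‖v t - u t‖ + ‖u t - u (t-1)‖ + ‖u (t-1) - v (t-1)‖ := by
              have e1 : v t - v (t-1) = (v t - u t) + (u t - u (t-1)) + (u (t-1) - v (t-1)) := by abel
              rw [e1]
              exact norm_add₃_le
          _ = a + b + c := by rw [norm_sub_rev (v t) (u t)]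
      have := step lam (f t (v t)) (f t (u t)) a b c (‖v t - x (t-1)‖) hlam
        (norm_nonneg _) (norm_nonneg _) (norm_nonneg _) (norm_nonneg _) htri hfv hqgt
      rw [hDt, hDtm]
      linarith
  calc ∑ t ∈ Icc 1 T, (f t (x t) + 1 / 2 * ‖x t - x (t - 1)‖ ^ 2)
      ≤ ∑ t ∈ Icc 1 T, ((1+4/lam)*(f t (u t) + 1/2*‖u t - u (t-1)‖^2) + (D (t-1) - D t)) :=
        Finset.sum_le_sum key
    _ = (1+4/lam) * ∑ t ∈ Icc 1 T, (f t (u t) + 1/2*‖u t - u (t-1)‖^2) + (D 0 - D T) := by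
        rw [Finset.sum_add_distrib, htel, Finset.mul_sum]
    _ ≤ (1+4/lam) * ∑ t ∈ Icc 1 T, (f t (u t) + 1/2*‖u t - u (t-1)‖^2) := by
        have hD0 : D 0 = 0 := by simp [hD]
        have hDT : 0 ≤ D T := by
          simp only [hD]; split
          · exact le_rfl
          · positivity
        linarith
end

section
/- Suppose X ⊆ ℝ^d is convex, each f_t : X → ℝ is convex, nonnegative, and λ-quadratic growth with minimizer v_t. Let γ = λ/(λ + √λ) and let x_t = argmin_{x∈X} (f_t(x) + (γ/2)‖x - x_{t-1}‖²) with x_0 = u_0. Then for any u_0, u_1, …, u_T ∈ X: Σ_{t=1}^T (f_t(x_t) + ½‖x_t - x_{t-1}‖²) ≤ (1 + 2/√λ) · Σ_{t=1}^T (f_t(u_t) + ½‖u_t - u_{t-1}‖²). -/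
open RealInnerProductSpace in
private lemma sq_norm_smul' {E : Type*} [NormedAddCommGroup E] [InnerProductSpace ℝ E]
    (c : ℝ) (w : E) : ‖c • w‖^2 = c^2 * ‖w‖^2 := by
  rw [norm_smul, mul_pow, Real.norm_eq_abs, sq_abs]

open RealInnerProductSpace in
private lemma combo_norm_sq' {E : Type*} [NormedAddCommGroup E] [InnerProductSpace ℝ E]
    (θ : ℝ) (u v : E) :
    ‖(1-θ) • u + θ • v‖^2 = (1-θ)*‖u‖^2 + θ*‖v‖^2 - θ*(1-θ)*‖v - u‖^2 := by
  have h1 := norm_add_sq_real ((1-θ) • u) (θ • v)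
  rw [sq_norm_smul', sq_norm_smul', real_inner_smul_left, real_inner_smul_right] at h1
  have h2 := norm_sub_sq_real v u
  rw [real_inner_comm u v] at h2
  linear_combination h1 + θ*(1-θ)*h2

private lemma strong_greedy' {E : Type*} [NormedAddCommGroup E] [InnerProductSpace ℝ E]
    {X : Set E} (hX : Convex ℝ X) {g : E → ℝ} (hg : ConvexOn ℝ X g)
    {γ : ℝ} (hγ : 0 < γ) {x₀ xs : E} (hxs : xs ∈ X)
    (hopt : ∀ y ∈ X, g xs + γ/2*‖xs - x₀‖^2 ≤ g y + γ/2*‖y - x₀‖^2) :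
    ∀ y ∈ X, g xs + γ/2*‖xs - x₀‖^2 + γ/2*‖y - xs‖^2 ≤ g y + γ/2*‖y - x₀‖^2 := by
  intro y hy
  have claim : ∀ θ : ℝ, 0 < θ → θ ≤ 1 →
      g xs + γ/2*‖xs - x₀‖^2 + γ/2*((1-θ)*‖y - xs‖^2) ≤ g y + γ/2*‖y - x₀‖^2 := by
    intro θ h0 h1
    have ha : (0:ℝ) ≤ 1 - θ := by linarith
    have hz : (1-θ) • xs + θ • y ∈ X := hX hxs hy ha h0.le (by ring)
    have hfz : g ((1-θ) • xs + θ • y) ≤ (1-θ) * g xs + θ * g y := hg.2 hxs hy ha h0.le (by ring)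
    have hgz := hopt _ hz
    have hzn : ((1-θ) • xs + θ • y) - x₀ = (1-θ) • (xs - x₀) + θ • (y - x₀) := by
      module
    have hnorm : ‖((1-θ) • xs + θ • y) - x₀‖^2
        = (1-θ)*‖xs - x₀‖^2 + θ*‖y - x₀‖^2 - θ*(1-θ)*‖y - xs‖^2 := by
      rw [hzn, combo_norm_sq' θ (xs - x₀) (y - x₀), show (y - x₀) - (xs - x₀) = y - xs by abel]
    rw [hnorm] at hgz
    have hstep : θ*(g xs + γ/2*‖xs - x₀‖^2 + γ/2*((1-θ)*‖y - xs‖^2))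
        ≤ θ*(g y + γ/2*‖y - x₀‖^2) := by nlinarith [hgz, hfz]
    exact le_of_mul_le_mul_left hstep h0
  refine le_of_forall_pos_le_add fun ε hε => ?_
  set m := γ/2*‖y - xs‖^2 with hm
  have hm0 : 0 ≤ m := by positivity
  have hden : (0:ℝ) < m + ε := by linarith
  have hθ0 : 0 < min 1 (ε/(m+ε)) := lt_min one_pos (div_pos hε hden)
  have hθ1 : min 1 (ε/(m+ε)) ≤ 1 := min_le_left _ _
  have hcl := claim _ hθ0 hθ1
  have h7 : (min 1 (ε/(m+ε)))*m ≤ ε := by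
    have h9 : (min 1 (ε/(m+ε)))*m ≤ (ε/(m+ε))*m :=
      mul_le_mul_of_nonneg_right (min_le_right _ _) hm0
    have h10 : (ε/(m+ε))*m ≤ ε := by
      rw [div_mul_eq_mul_div, div_le_iff₀ hden]; nlinarith
    linarith
  have h11 : γ/2*((1 - min 1 (ε/(m+ε)))*‖y - xs‖^2) = m - (min 1 (ε/(m+ε)))*m := by
    rw [hm]; ring
  linarith [hcl]

private lemma amgm' (σ S a p R w : ℝ) (hσ : 0 < σ) (hw : 0 ≤ w) (hS : 0 ≤ S)
    (hR : 0 ≤ R) (h1 : w ≤ S + R) (h2 : R ≤ a + p) :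
    1/2*w^2 ≤ (1/2+1/σ)*S^2 + 1/2*R^2 + σ/2*a^2 + σ/2*p^2 := by
  have hw2 : w^2 ≤ (S+R)^2 := by nlinarith
  have h3 : S*R ≤ S*(a+p) := mul_le_mul_of_nonneg_left h2 hS
  have h4 : σ*(S*(a+p)) ≤ σ^2/2*a^2 + σ^2/2*p^2 + S^2 := by
    nlinarith [sq_nonneg (σ*a - S), sq_nonneg (σ*p - S)]
  have h5 : S*(a+p) ≤ σ/2*a^2 + σ/2*p^2 + 1/σ*S^2 := by
    rw [show σ/2*a^2 + σ/2*p^2 + 1/σ*S^2 = (σ^2/2*a^2 + σ^2/2*p^2 + S^2)/σ by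
      field_simp, le_div_iff₀ hσ]
    nlinarith [h4]
  nlinarith [hw2, h3, h5]

open Finset in
theorem stmt_4 {d : ℕ} (T : ℕ) (X : Set (EuclideanSpace ℝ (Fin d))) (hX : Convex ℝ X)
    (f : ℕ → EuclideanSpace ℝ (Fin d) → ℝ)
    (v x u : ℕ → EuclideanSpace ℝ (Fin d))
    (lam γ : ℝ) (hlam : 0 < lam) (hγ : γ = lam / (lam + Real.sqrt lam))
    (hu : ∀ t ≤ T, u t ∈ X)
    (hvX : ∀ t ∈ Icc 1 T, v t ∈ X)
    (hconv : ∀ t ∈ Icc 1 T, ConvexOn ℝ X (f t))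
    (hnonneg : ∀ t ∈ Icc 1 T, ∀ y ∈ X, 0 ≤ f t y)
    (hmin : ∀ t ∈ Icc 1 T, ∀ y ∈ X, f t (v t) ≤ f t y)
    (hqg : ∀ t ∈ Icc 1 T, ∀ y ∈ X, f t y - f t (v t) ≥ lam / 2 * ‖y - v t‖ ^ 2)
    (hxX : ∀ t ∈ Icc 1 T, x t ∈ X)
    (hgreedy : ∀ t ∈ Icc 1 T, ∀ y ∈ X,
      f t (x t) + γ / 2 * ‖x t - x (t - 1)‖ ^ 2 ≤ f t y + γ / 2 * ‖y - x (t - 1)‖ ^ 2)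
    (hx0 : x 0 = u 0) :
    ∑ t ∈ Icc 1 T, (f t (x t) + 1 / 2 * ‖x t - x (t - 1)‖ ^ 2) ≤
      (1 + 2 / Real.sqrt lam) *
        ∑ t ∈ Icc 1 T, (f t (u t) + 1 / 2 * ‖u t - u (t - 1)‖ ^ 2) := by
  set σ := Real.sqrt lam with hσdef
  have hσ : 0 < σ := Real.sqrt_pos.mpr hlam
  have hσ0 : σ ≠ 0 := ne_of_gt hσ
  have hlam' : σ^2 = lam := Real.sq_sqrt hlam.le
  have hγσ : γ = σ^2/(σ^2+σ) := by rw [hγ, hlam']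
  have hγpos : 0 < γ := by
    rw [hγσ]; positivity
  have hkey : (1 + 1/σ) * (γ/2) = 1/2 := by
    rw [hγσ]; field_simp
  have tri : ∀ A B C : EuclideanSpace ℝ (Fin d), ‖A - C‖ ≤ ‖A - B‖ + ‖B - C‖ := by
    intro A B C
    simpa [dist_eq_norm] using dist_triangle A B C
  -- strengthened greedy inequality
  have hstrong : ∀ t ∈ Icc 1 T, ∀ y ∈ X,
      f t (x t) + γ/2*‖x t - x (t-1)‖^2 + γ/2*‖y - x t‖^2 ≤ f t y + γ/2*‖y - x (t-1)‖^2 := by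
    intro t ht y hy
    exact strong_greedy' hX (hconv t ht) hγpos (hxX t ht) (hgreedy t ht) y hy
  -- per-step inequality
  have hB : ∀ t ∈ Icc 1 T,
      f t (x t) + 1/2*‖x t - x (t-1)‖^2 + 1/2*‖x t - u t‖^2 + σ/2*‖x t - v t‖^2
        ≤ (1+1/σ)*(f t (u t)) + 1/2*‖u t - x (t-1)‖^2 := by
    intro t ht
    have hS := hstrong t ht (u t) (hu t (mem_Icc.mp ht).2)
    have hq := hqg t ht (x t) (hxX t ht)
    rw [← hlam'] at hq
    have hv0 := hnonneg t ht (v t) (hvX t ht)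
    have hfx : σ^2/2*‖x t - v t‖^2 ≤ f t (x t) := by linarith
    have hpos : (0:ℝ) ≤ 1 + 1/σ := by positivity
    have hmul := mul_le_mul_of_nonneg_left hS hpos
    have e1 : (1+1/σ)*(f t (x t) + γ/2*‖x t - x (t-1)‖^2 + γ/2*‖u t - x t‖^2)
        = f t (x t) + 1/σ*f t (x t) + 1/2*‖x t - x (t-1)‖^2 + 1/2*‖u t - x t‖^2 := by
      linear_combination (‖x t - x (t-1)‖^2 + ‖u t - x t‖^2) * hkey
    have e2 : (1+1/σ)*(f t (u t) + γ/2*‖u t - x (t-1)‖^2)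
        = (1+1/σ)*(f t (u t)) + 1/2*‖u t - x (t-1)‖^2 := by
      linear_combination (‖u t - x (t-1)‖^2) * hkey
    rw [e1, e2] at hmul
    have h1σ : σ/2*‖x t - v t‖^2 ≤ 1/σ * f t (x t) := by
      have h2 : 1/σ * (σ^2/2*‖x t - v t‖^2) ≤ 1/σ * f t (x t) :=
        mul_le_mul_of_nonneg_left hfx (by positivity)
      have h3 : 1/σ * (σ^2/2*‖x t - v t‖^2) = σ/2*‖x t - v t‖^2 := by
        field_simp
      linarith
    have hrev : ‖x t - u t‖ = ‖u t - x t‖ := norm_sub_rev _ _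
    rw [hrev]
    linarith [hmul, h1σ]
  -- main induction
  have main : ∀ N : ℕ, N ≤ T →
      ∑ t ∈ Icc 1 N, (f t (x t) + 1/2*‖x t - x (t-1)‖^2)
        + (1/2*‖x N - u N‖^2 + (if N = 0 then (0:ℝ) else σ/2*‖x N - v N‖^2))
      ≤ ∑ t ∈ Icc 1 N, ((1+1/σ)*(f t (u t)) + (1/2+1/σ)*‖u t - u (t-1)‖^2)
        + ∑ t ∈ Icc 1 (N-1), σ/2*‖u t - v t‖^2 := by
    intro N
    induction N with
    | zero =>
      intro _
      rw [show Icc 1 0 = (∅ : Finset ℕ) from Finset.Icc_eq_empty (by omega)]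
      simp [hx0]
    | succ N ih =>
      intro hN1
      have hN : N ≤ T := Nat.le_of_succ_le hN1
      have ht : N+1 ∈ Icc 1 T := mem_Icc.mpr ⟨by omega, hN1⟩
      have hBt := hB (N+1) ht
      rw [Finset.sum_Icc_succ_top (show 1 ≤ N+1 by omega),
          Finset.sum_Icc_succ_top (show 1 ≤ N+1 by omega)]
      simp only [Nat.add_sub_cancel] at hBt ⊢
      rcases Nat.eq_zero_or_pos N with h0 | hpos
      · subst h0
        rw [show Icc 1 0 = (∅ : Finset ℕ) from Finset.Icc_eq_empty (by omega)]
        rw [hx0] at hBt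
        norm_num at hBt
        norm_num [hx0]
        have hpos2 : (0:ℝ) ≤ σ⁻¹*‖u 1 - u 0‖^2 := by positivity
        linarith [hBt]
      · have ihN := ih hN
        have hNsub : N - 1 + 1 = N := Nat.succ_pred_eq_of_pos hpos
        have hsplit : ∑ t ∈ Icc 1 N, σ/2*‖u t - v t‖^2
            = (∑ t ∈ Icc 1 (N-1), σ/2*‖u t - v t‖^2) + σ/2*‖u N - v N‖^2 := by
          conv_lhs => rw [← hNsub]
          rw [Finset.sum_Icc_succ_top (by omega : 1 ≤ N - 1 + 1), hNsub]
        rw [hsplit]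
        have ht1 : ‖u (N+1) - x N‖ ≤ ‖u (N+1) - u N‖ + ‖x N - u N‖ := by
          rw [norm_sub_rev (x N) (u N)]; exact tri _ _ _
        have ht2 : ‖x N - u N‖ ≤ ‖x N - v N‖ + ‖u N - v N‖ := by
          rw [norm_sub_rev (u N) (v N)]; exact tri _ _ _
        have hkey2 := amgm' σ ‖u (N+1) - u N‖ ‖x N - v N‖ ‖u N - v N‖ ‖x N - u N‖
          ‖u (N+1) - x N‖ hσ (norm_nonneg _) (norm_nonneg _) (norm_nonneg _) ht1 ht2
        have hif1 : (if N+1 = 0 then (0:ℝ) else σ/2*‖x (N+1) - v (N+1)‖^2)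
            = σ/2*‖x (N+1) - v (N+1)‖^2 := if_neg (by omega)
        have hif2 : (if N = 0 then (0:ℝ) else σ/2*‖x N - v N‖^2)
            = σ/2*‖x N - v N‖^2 := if_neg (by omega)
        rw [hif1]
        rw [hif2] at ihN
        linarith [ihN, hBt, hkey2]
  have hmain := main T le_rfl
  have hsub : Icc 1 (T-1) ⊆ Icc 1 T := Finset.Icc_subset_Icc_right (Nat.sub_le T 1)
  have hp1 : ∀ t ∈ Icc 1 T, σ/2*‖u t - v t‖^2 ≤ 1/σ * f t (u t) := by
    intro t ht
    have h1 := hqg t ht (u t) (hu t (mem_Icc.mp ht).2)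
    rw [← hlam'] at h1
    have h2 := hnonneg t ht (v t) (hvX t ht)
    have h3 : σ^2/2*‖u t - v t‖^2 ≤ f t (u t) := by linarith
    have h4 := mul_le_mul_of_nonneg_left h3 (le_of_lt (by positivity : (0:ℝ) < 1/σ))
    have h5 : 1/σ*(σ^2/2*‖u t - v t‖^2) = σ/2*‖u t - v t‖^2 := by field_simp
    linarith
  have hp2 : ∑ t ∈ Icc 1 (T-1), σ/2*‖u t - v t‖^2 ≤ ∑ t ∈ Icc 1 T, 1/σ * f t (u t) := by
    calc ∑ t ∈ Icc 1 (T-1), σ/2*‖u t - v t‖^2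
        ≤ ∑ t ∈ Icc 1 (T-1), 1/σ * f t (u t) :=
          Finset.sum_le_sum (fun t ht => hp1 t (hsub ht))
      _ ≤ ∑ t ∈ Icc 1 T, 1/σ * f t (u t) := by
          refine Finset.sum_le_sum_of_subset_of_nonneg hsub (fun t ht _ => ?_)
          have := hnonneg t ht (u t) (hu t (mem_Icc.mp ht).2)
          positivity
  have hΦpos : (0:ℝ) ≤ 1/2*‖x T - u T‖^2 + (if T = 0 then (0:ℝ) else σ/2*‖x T - v T‖^2) := by
    split_ifs with h
    · positivity
    · positivity
  have hfinal : (1 + 2/σ) * ∑ t ∈ Icc 1 T, (f t (u t) + 1/2*‖u t - u (t-1)‖^2)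
      = ∑ t ∈ Icc 1 T, ((1+1/σ)*(f t (u t)) + (1/2+1/σ)*‖u t - u (t-1)‖^2)
        + ∑ t ∈ Icc 1 T, 1/σ * f t (u t) := by
    rw [Finset.mul_sum, ← Finset.sum_add_distrib]
    exact Finset.sum_congr rfl (fun t _ => by ring)
  have goalrw : (1 + 2/σ) * ∑ t ∈ Icc 1 T, (f t (u t) + 1 / 2 * ‖u t - u (t - 1)‖ ^ 2)
      = (1 + 2/σ) * ∑ t ∈ Icc 1 T, (f t (u t) + 1/2*‖u t - u (t-1)‖^2) := by norm_num
  rw [goalrw, hfinal]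
  have hsame : ∑ t ∈ Icc 1 T, (f t (x t) + 1 / 2 * ‖x t - x (t - 1)‖ ^ 2)
      = ∑ t ∈ Icc 1 T, (f t (x t) + 1/2*‖x t - x (t-1)‖^2) := by norm_num
  rw [hsame]
  linarith [hmain, hp2, hΦpos]
end

section
/- Let each f_t : X → ℝ be α-polyhedral with minimizer v_t and nonnegative. With x_t = v_t and x_0 = u_0, the total cost satisfies: Σ_{t=1}^T (f_t(x_t) + ‖x_t - x_{t-1}‖) ≤ (2/α)Σ_{t=1}^T f_t(u_t) + Σ_{t=1}^T ‖u_t - u_{t-1}‖ + Σ_{t=1}^T (1 - 2/α) f_t(x_t), for any u_0, …, u_T ∈ X. -/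
open Finset in
lemma aux_shift_sum (h q : ℕ → ℝ) (h0 : h 0 = 0) (hh : ∀ t, 0 ≤ h t)
    (hhq : ∀ t, 1 ≤ t → h t ≤ q t) :
    ∀ T : ℕ, ∑ t ∈ Icc 1 T, h (t - 1) + h T ≤ ∑ t ∈ Icc 1 T, q t := by
  intro T
  induction T with
  | zero => simp [h0]
  | succ n ih =>
    rw [Finset.sum_Icc_succ_top (Nat.succ_le_succ (Nat.zero_le n)),
      Finset.sum_Icc_succ_top (Nat.succ_le_succ (Nat.zero_le n))]
    have h1 : h (n + 1 - 1) = h n := rfl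
    have h2 : h (n + 1) ≤ q (n + 1) := hhq (n + 1) (by omega)
    linarith

open Finset in
theorem stmt_6 {d : ℕ} (T : ℕ) (X : Set (EuclideanSpace ℝ (Fin d)))
    (f : ℕ → EuclideanSpace ℝ (Fin d) → ℝ)
    (v x u : ℕ → EuclideanSpace ℝ (Fin d))
    (α : ℝ) (hα : 0 < α)
    (hu : ∀ t ≤ T, u t ∈ X)
    (hvX : ∀ t ∈ Icc 1 T, v t ∈ X)
    (hnonneg : ∀ t ∈ Icc 1 T, ∀ y ∈ X, 0 ≤ f t y)
    (hmin : ∀ t ∈ Icc 1 T, ∀ y ∈ X, f t (v t) ≤ f t y)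
    (hpoly : ∀ t ∈ Icc 1 T, ∀ y ∈ X, f t y - f t (v t) ≥ α * ‖y - v t‖)
    (hx : ∀ t ∈ Icc 1 T, x t = v t)
    (hx0 : x 0 = u 0) :
    ∑ t ∈ Icc 1 T, (f t (x t) + ‖x t - x (t - 1)‖) ≤
      (2 / α) * ∑ t ∈ Icc 1 T, f t (u t) + ∑ t ∈ Icc 1 T, ‖u t - u (t - 1)‖ +
        ∑ t ∈ Icc 1 T, (1 - 2 / α) * f t (x t) := by
  set h : ℕ → ℝ := fun s => ‖u s - x s‖ with hh_def
  set q : ℕ → ℝ := fun t => if t ≤ T then (1 / α) * (f t (u t) - f t (x t)) else h t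
    with hq_def
  have h0 : h 0 = 0 := by simp [hh_def, hx0]
  have hhnn : ∀ t, 0 ≤ h t := fun t => norm_nonneg _
  -- key pointwise bound for 1 ≤ t ≤ T
  have hqbound : ∀ t ∈ Icc 1 T, h t ≤ (1 / α) * (f t (u t) - f t (x t)) := by
    intro t ht
    have htT : t ≤ T := (Finset.mem_Icc.mp ht).2
    have huX : u t ∈ X := hu t htT
    have hp := hpoly t ht (u t) huX
    have hxv := hx t ht
    have : α * ‖u t - v t‖ ≤ f t (u t) - f t (v t) := hp
    rw [hxv]
    simp only [hh_def]
    rw [hxv]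
    rw [ge_iff_le] at hp
    calc ‖u t - v t‖ = (1 / α) * (α * ‖u t - v t‖) := by field_simp
      _ ≤ (1 / α) * (f t (u t) - f t (v t)) := by
          apply mul_le_mul_of_nonneg_left hp (by positivity)
  have hhq : ∀ t, 1 ≤ t → h t ≤ q t := by
    intro t ht1
    simp only [hq_def]
    by_cases htT : t ≤ T
    · simp only [if_pos htT]
      exact hqbound t (Finset.mem_Icc.mpr ⟨ht1, htT⟩)
    · simp [if_neg htT]
  have key := aux_shift_sum h q h0 hhnn hhq T
  have hqeq : ∑ t ∈ Icc 1 T, q t = ∑ t ∈ Icc 1 T, (1 / α) * (f t (u t) - f t (x t)) := by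
    apply Finset.sum_congr rfl
    intro t ht
    simp [hq_def, (Finset.mem_Icc.mp ht).2]
  -- termwise triangle inequality
  have htri : ∀ t ∈ Icc 1 T, ‖x t - x (t - 1)‖ ≤
      (1 / α) * (f t (u t) - f t (x t)) + ‖u t - u (t - 1)‖ + h (t - 1) := by
    intro t ht
    have hsplit : x t - x (t - 1) =
        (x t - u t) + ((u t - u (t - 1)) + (u (t - 1) - x (t - 1))) := by abel
    calc ‖x t - x (t - 1)‖ ≤ ‖x t - u t‖ + (‖u t - u (t - 1)‖ + ‖u (t - 1) - x (t - 1)‖) := by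
          rw [hsplit]
          exact le_trans (norm_add_le _ _) (by gcongr; exact norm_add_le _ _)
      _ = ‖u t - x t‖ + ‖u t - u (t - 1)‖ + h (t - 1) := by
          rw [norm_sub_rev]; simp [hh_def]; ring
      _ ≤ (1 / α) * (f t (u t) - f t (x t)) + ‖u t - u (t - 1)‖ + h (t - 1) := by
          have := hqbound t ht
          simp only [hh_def] at this
          linarith
  have hsum1 : ∑ t ∈ Icc 1 T, ‖x t - x (t - 1)‖ ≤
      ∑ t ∈ Icc 1 T, ((1 / α) * (f t (u t) - f t (x t)) + ‖u t - u (t - 1)‖ + h (t - 1)) :=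
    Finset.sum_le_sum htri
  have hsum2 : ∑ t ∈ Icc 1 T, h (t - 1) ≤
      ∑ t ∈ Icc 1 T, (1 / α) * (f t (u t) - f t (x t)) := by
    rw [← hqeq]
    have := hhnn T
    linarith
  rw [Finset.sum_add_distrib]
  rw [Finset.sum_add_distrib, Finset.sum_add_distrib] at hsum1
  have e1 : ∑ t ∈ Icc 1 T, (1 / α) * (f t (u t) - f t (x t)) =
      (1 / α) * ∑ t ∈ Icc 1 T, f t (u t) - (1 / α) * ∑ t ∈ Icc 1 T, f t (x t) := by
    simp only [← Finset.mul_sum, Finset.sum_sub_distrib, mul_sub]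
  have e2 : ∑ t ∈ Icc 1 T, (1 - 2 / α) * f t (x t) =
      ∑ t ∈ Icc 1 T, f t (x t) - (2 / α) * ∑ t ∈ Icc 1 T, f t (x t) := by
    rw [← Finset.mul_sum]; ring
  rw [e2]
  rw [e1] at hsum1 hsum2
  have h2a : 2 / α = (1 / α) + (1 / α) := by field_simp; ring
  rw [h2a]
  linarith
end

section
/- If α ≥ 2 and each f_t is nonnegative α-polyhedral with minimizer v_t, then playing x_t = v_t (with x_0 = u_0) achieves a competitive ratio of 1: Σ_{t=1}^T (f_t(x_t) + ‖x_t - x_{t-1}‖) ≤ Σ_{t=1}^T (f_t(u_t) + ‖u_t - u_{t-1}‖) for all u_0, …, u_T ∈ X. -/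
open Finset in
theorem stmt_7 {d : ℕ} (T : ℕ) (X : Set (EuclideanSpace ℝ (Fin d)))
    (f : ℕ → EuclideanSpace ℝ (Fin d) → ℝ)
    (v x u : ℕ → EuclideanSpace ℝ (Fin d))
    (α : ℝ) (hα : 2 ≤ α)
    (hu : ∀ t ≤ T, u t ∈ X)
    (hvX : ∀ t ∈ Icc 1 T, v t ∈ X)
    (hnonneg : ∀ t ∈ Icc 1 T, ∀ y ∈ X, 0 ≤ f t y)
    (hmin : ∀ t ∈ Icc 1 T, ∀ y ∈ X, f t (v t) ≤ f t y)
    (hpoly : ∀ t ∈ Icc 1 T, ∀ y ∈ X, f t y - f t (v t) ≥ α * ‖y - v t‖)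
    (hx : ∀ t ∈ Icc 1 T, x t = v t)
    (hx0 : x 0 = u 0) :
    ∑ t ∈ Icc 1 T, (f t (x t) + ‖x t - x (t - 1)‖) ≤
      ∑ t ∈ Icc 1 T, (f t (u t) + ‖u t - u (t - 1)‖) := by
  have key : ∀ n, n ≤ T →
      ∑ t ∈ Icc 1 n, (f t (x t) + ‖x t - x (t - 1)‖) + ‖u n - x n‖ ≤
        ∑ t ∈ Icc 1 n, (f t (u t) + ‖u t - u (t - 1)‖) := by
    intro n
    induction n with
    | zero =>
      intro _
      simp [hx0]
    | succ n ih =>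
      intro hn
      have hn' : n ≤ T := Nat.le_of_succ_le hn
      have hmem : n + 1 ∈ Icc 1 T := by
        simp [Nat.succ_le_iff]; omega
      have huX : u (n + 1) ∈ X := hu _ hn
      have hxv : x (n + 1) = v (n + 1) := hx _ hmem
      have hpoly' : f (n+1) (u (n+1)) - f (n+1) (v (n+1)) ≥ α * ‖u (n+1) - v (n+1)‖ :=
        hpoly _ hmem _ huX
      have hnorm : (0:ℝ) ≤ ‖u (n+1) - v (n+1)‖ := norm_nonneg _
      have htri : ‖x (n+1) - x n‖ ≤ ‖u (n+1) - v (n+1)‖ + ‖u (n+1) - u n‖ + ‖u n - x n‖ := by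
        calc ‖x (n+1) - x n‖ ≤ ‖x (n+1) - u n‖ + ‖u n - x n‖ := norm_sub_le_norm_sub_add_norm_sub _ _ _
          _ ≤ (‖x (n+1) - u (n+1)‖ + ‖u (n+1) - u n‖) + ‖u n - x n‖ := by
              gcongr; exact norm_sub_le_norm_sub_add_norm_sub _ _ _
          _ = ‖u (n+1) - v (n+1)‖ + ‖u (n+1) - u n‖ + ‖u n - x n‖ := by
              rw [hxv, norm_sub_rev]
      have hsum1 : ∑ t ∈ Icc 1 (n+1), (f t (x t) + ‖x t - x (t - 1)‖) =
          ∑ t ∈ Icc 1 n, (f t (x t) + ‖x t - x (t - 1)‖) + (f (n+1) (x (n+1)) + ‖x (n+1) - x n‖) := by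
        rw [Finset.sum_Icc_succ_top (by omega)]; simp
      have hsum2 : ∑ t ∈ Icc 1 (n+1), (f t (u t) + ‖u t - u (t - 1)‖) =
          ∑ t ∈ Icc 1 n, (f t (u t) + ‖u t - u (t - 1)‖) + (f (n+1) (u (n+1)) + ‖u (n+1) - u n‖) := by
        rw [Finset.sum_Icc_succ_top (by omega)]; simp
      have ih' := ih hn'
      have halpha : α * ‖u (n+1) - v (n+1)‖ ≥ 2 * ‖u (n+1) - v (n+1)‖ := by nlinarith
      rw [hxv] at htri
      rw [hsum1, hsum2, hxv]
      nlinarith [htri, hpoly', halpha, ih']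
  have h := key T le_rfl
  have : (0:ℝ) ≤ ‖u T - x T‖ := norm_nonneg _
  linarith
end

section
/- Consider lookahead Hedge over N experts with initial weights w_0^η > 0 summing to 1, losses ℓ_t(x_t^η), learning rate β > 0, and updates w_t^η = w_{t-1}^η e^{-β ℓ_t(x_t^η)} / Σ_η w_{t-1}^η e^{-β ℓ_t(x_t^η)} (using the current round's loss). Then for any expert η: Σ_{t=1}^T (Σ_η w_t^η ℓ_t(x_t^η) - ℓ_t(x_t^η)) ≤ (1/β) ln(1/w_0^η) - (1/(2β)) Σ_{t=1}^T ‖w_t - w_{t-1}‖₁². -/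
section StmtAux

open Real Finset

lemma aux_exp (y : ℝ) (hy : 0 ≤ y) :
    (1 - y) * Real.exp y ≤ (1 + y) * Real.exp (-y) := by
  have hd : ∀ x : ℝ, HasDerivAt (fun y : ℝ => (1 + y) * Real.exp (-y) - (1 - y) * Real.exp y)
      (x * (Real.exp x - Real.exp (-x))) x := by
    intro x
    have e1 : HasDerivAt (fun y : ℝ => Real.exp (-y)) (-Real.exp (-x)) x := by
      refine ((Real.hasDerivAt_exp (-x)).comp x ((hasDerivAt_id x).neg)).congr_deriv ?_
      ring
    have h1 : HasDerivAt (fun y : ℝ => (1 + y) * Real.exp (-y))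
        (1 * Real.exp (-x) + (1 + x) * (-Real.exp (-x))) x :=
      (((hasDerivAt_id x).const_add 1)).mul e1
    have h2 : HasDerivAt (fun y : ℝ => (1 - y) * Real.exp y)
        ((-1) * Real.exp x + (1 - x) * Real.exp x) x := by
      have : HasDerivAt (fun y : ℝ => 1 - y) (-1) x := by
        refine ((hasDerivAt_const x (1:ℝ)).sub (hasDerivAt_id x)).congr_deriv ?_
        ring
      exact this.mul (Real.hasDerivAt_exp x)
    refine (h1.sub h2).congr_deriv ?_
    ring
  have hmono : MonotoneOn (fun y : ℝ => (1 + y) * Real.exp (-y) - (1 - y) * Real.exp y)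
      (Set.Ici (0:ℝ)) := by
    apply monotoneOn_of_deriv_nonneg (convex_Ici 0)
    · exact fun x _ => (hd x).continuousAt.continuousWithinAt
    · exact fun x _ => (hd x).differentiableAt.differentiableWithinAt
    · intro x hx
      rw [interior_Ici, Set.mem_Ioi] at hx
      rw [(hd x).deriv]
      have h := Real.exp_le_exp.mpr (by linarith : -x ≤ x)
      nlinarith
  have h0 := hmono Set.self_mem_Ici (Set.mem_Ici.mpr hy) hy
  simp only [Real.exp_zero] at h0
  norm_num at h0
  linarith

lemma log_ge_ratio (t : ℝ) (ht : 1 ≤ t) : 2 * (t - 1) / (t + 1) ≤ Real.log t := by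
  have ht0 : (0:ℝ) < t := by linarith
  set y := Real.log t / 2 with hy
  have hy0 : 0 ≤ y := by
    have := Real.log_nonneg ht
    positivity
  have hexp : Real.exp (2 * y) = t := by
    rw [hy]
    rw [show 2 * (Real.log t / 2) = Real.log t by ring, Real.exp_log ht0]
  have h := aux_exp y hy0
  have h2 : (1 - y) * t ≤ 1 + y := by
    have hep : (0:ℝ) < Real.exp (-y) := Real.exp_pos _
    have h3 := mul_le_mul_of_nonneg_right h (Real.exp_pos y).le
    have e1 : Real.exp y * Real.exp y = t := by rw [← Real.exp_add]; rw [← hexp]; ring_nf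
    have e2 : Real.exp (-y) * Real.exp y = 1 := by rw [← Real.exp_add]; simp
    calc (1 - y) * t = (1 - y) * Real.exp y * Real.exp y := by rw [mul_assoc, e1]
      _ ≤ (1 + y) * Real.exp (-y) * Real.exp y := h3
      _ = 1 + y := by rw [mul_assoc, e2, mul_one]
  rw [div_le_iff₀ (by linarith : (0:ℝ) < t + 1)]
  have hlog : Real.log t = 2 * y := by rw [hy]; ring
  rw [hlog]
  nlinarith

lemma log_le_ratio (t : ℝ) (ht0 : 0 < t) (ht : t ≤ 1) : Real.log t ≤ 2 * (t - 1) / (t + 1) := by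
  have h := log_ge_ratio (1/t) (by rw [le_div_iff₀ ht0]; linarith)
  rw [Real.log_div one_ne_zero ht0.ne', Real.log_one] at h
  have : 2 * (1/t - 1) / (1/t + 1) = -(2 * (t - 1) / (t + 1)) := by
    field_simp
    ring
  rw [this] at h
  linarith

lemma phi_nonneg (t : ℝ) (ht : 0 < t) :
    3 * (t - 1) ^ 2 / (2 * (t + 2)) ≤ t * Real.log t - t + 1 := by
  have hd : ∀ x : ℝ, 0 < x → HasDerivAt
      (fun t : ℝ => t * Real.log t - t + 1 - 3 * (t - 1) ^ 2 / (2 * (t + 2)))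
      (Real.log x - 3 * (x - 1) * (x + 5) / (2 * (x + 2) ^ 2)) x := by
    intro x hx
    have h1 : HasDerivAt (fun t : ℝ => t * Real.log t) (Real.log x + 1) x :=
      Real.hasDerivAt_mul_log hx.ne'
    have hnum : HasDerivAt (fun t : ℝ => 3 * (t - 1) ^ 2) (3 * (2 * (x - 1))) x := by
      have : HasDerivAt (fun t : ℝ => t - 1) 1 x := (hasDerivAt_id x).sub_const 1
      simpa using ((this.pow 2).const_mul 3)
    have hden : HasDerivAt (fun t : ℝ => 2 * (t + 2)) 2 x := by
      simpa using ((hasDerivAt_id x).add_const 2).const_mul 2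
    have hden0 : 2 * (x + 2) ≠ 0 := by positivity
    have h2 := hnum.div hden hden0
    have h3 := ((h1.sub (hasDerivAt_id x)).add_const 1).sub h2
    refine h3.congr_deriv ?_
    field_simp
    ring
  have gsign_pos : ∀ x : ℝ, 1 ≤ x →
      0 ≤ Real.log x - 3 * (x - 1) * (x + 5) / (2 * (x + 2) ^ 2) := by
    intro x hx
    have h1 := log_ge_ratio x hx
    have h2 : 3 * (x - 1) * (x + 5) / (2 * (x + 2) ^ 2) ≤ 2 * (x - 1) / (x + 1) := by
      rw [div_le_div_iff₀ (by positivity) (by positivity)]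
      nlinarith [sq_nonneg (x - 1), sq_nonneg (x + 2)]
    linarith
  have gsign_neg : ∀ x : ℝ, 0 < x → x ≤ 1 →
      Real.log x - 3 * (x - 1) * (x + 5) / (2 * (x + 2) ^ 2) ≤ 0 := by
    intro x hx0 hx
    have h1 := log_le_ratio x hx0 hx
    have h2 : 2 * (x - 1) / (x + 1) ≤ 3 * (x - 1) * (x + 5) / (2 * (x + 2) ^ 2) := by
      rw [div_le_div_iff₀ (by positivity) (by positivity)]
      nlinarith [sq_nonneg (x + 2), mul_nonneg (mul_nonneg (by linarith : (0:ℝ) ≤ 1 - x) (by linarith : (0:ℝ) ≤ 1 - x)) (by linarith : (0:ℝ) ≤ 1 - x)]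
    linarith
  set f : ℝ → ℝ := fun t => t * Real.log t - t + 1 - 3 * (t - 1) ^ 2 / (2 * (t + 2)) with hf
  have hf1 : f 1 = 0 := by simp [hf]
  have key : 0 ≤ f t := by
    rcases le_or_gt 1 t with h | h
    · have hmono : MonotoneOn f (Set.Icc 1 t) := by
        apply monotoneOn_of_deriv_nonneg (convex_Icc 1 t)
        · intro x hx
          exact (hd x (by linarith [hx.1] : (0:ℝ) < x)).continuousAt.continuousWithinAt
        · intro x hx
          rw [interior_Icc] at hx
          exact (hd x (by linarith [hx.1])).differentiableAt.differentiableWithinAt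
        · intro x hx
          rw [interior_Icc] at hx
          rw [(hd x (by linarith [hx.1])).deriv]
          exact gsign_pos x hx.1.le
      have := hmono (Set.mem_Icc.mpr ⟨le_refl 1, h⟩) (Set.mem_Icc.mpr ⟨h, le_refl t⟩) h
      rw [hf1] at this
      exact this
    · have hmono : AntitoneOn f (Set.Icc t 1) := by
        apply antitoneOn_of_deriv_nonpos (convex_Icc t 1)
        · intro x hx
          exact (hd x (by linarith [hx.1] : (0:ℝ) < x)).continuousAt.continuousWithinAt
        · intro x hx
          rw [interior_Icc] at hx
          exact (hd x (by linarith [hx.1])).differentiableAt.differentiableWithinAt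
        · intro x hx
          rw [interior_Icc] at hx
          exact (hd x (by linarith [hx.1])).deriv ▸ gsign_neg x (by linarith [hx.1]) hx.2.le
      have := hmono (Set.mem_Icc.mpr ⟨le_refl t, h.le⟩) (Set.mem_Icc.mpr ⟨h.le, le_refl 1⟩) h.le
      rw [hf1] at this
      exact this
  simp only [hf] at key
  linarith

lemma phi_xy (x y : ℝ) (hx : 0 < x) (hy : 0 < y) :
    3 * (x - y) ^ 2 / (2 * (x + 2 * y)) ≤ x * Real.log (x / y) - x + y := by
  have h := phi_nonneg (x / y) (by positivity)
  have h2 := mul_le_mul_of_nonneg_left h hy.le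
  calc 3 * (x - y) ^ 2 / (2 * (x + 2 * y))
      = y * (3 * (x / y - 1) ^ 2 / (2 * (x / y + 2))) := by
        field_simp
    _ ≤ y * (x / y * Real.log (x / y) - x / y + 1) := h2
    _ = x * Real.log (x / y) - x + y := by
        field_simp

lemma pinsker {ι : Type*} (s : Finset ι) (p q : ι → ℝ)
    (hp : ∀ i ∈ s, 0 < p i) (hq : ∀ i ∈ s, 0 < q i)
    (hps : ∑ i ∈ s, p i = 1) (hqs : ∑ i ∈ s, q i = 1) :
    (∑ i ∈ s, |p i - q i|) ^ 2 / 2 ≤ ∑ i ∈ s, p i * Real.log (p i / q i) := by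
  have hgpos : ∀ i ∈ s, 0 < p i + 2 * q i := fun i hi => by
    have := hp i hi; have := hq i hi; linarith
  have cs : (∑ i ∈ s, |p i - q i|) ^ 2 / 3 ≤ ∑ i ∈ s, (p i - q i) ^ 2 / (p i + 2 * q i) := by
    have h := Finset.sq_sum_div_le_sum_sq_div s (fun i => |p i - q i|) hgpos
    have hsum : ∑ i ∈ s, (p i + 2 * q i) = 3 := by
      rw [Finset.sum_add_distrib, ← Finset.mul_sum, hps, hqs]; ring
    rw [hsum] at h
    simpa [sq_abs] using h
  have hptw : ∑ i ∈ s, 3 * (p i - q i) ^ 2 / (2 * (p i + 2 * q i)) ≤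
      ∑ i ∈ s, (p i * Real.log (p i / q i) - p i + q i) :=
    Finset.sum_le_sum fun i hi => phi_xy (p i) (q i) (hp i hi) (hq i hi)
  have hsplit : ∑ i ∈ s, (p i * Real.log (p i / q i) - p i + q i) =
      ∑ i ∈ s, p i * Real.log (p i / q i) := by
    rw [Finset.sum_add_distrib, Finset.sum_sub_distrib, hps, hqs]
    ring
  have heq : ∑ i ∈ s, 3 * (p i - q i) ^ 2 / (2 * (p i + 2 * q i)) =
      (3 / 2) * ∑ i ∈ s, (p i - q i) ^ 2 / (p i + 2 * q i) := by
    rw [Finset.mul_sum]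
    refine Finset.sum_congr rfl fun i hi => ?_
    have hb := (hgpos i hi).ne'
    rw [mul_div_assoc]
    field_simp
  rw [hsplit] at hptw
  rw [heq] at hptw
  nlinarith [cs]

end StmtAux

open Finset in
/-- Lookahead Hedge: the weights are updated using the current round's losses,
`w t η = w (t-1) η * exp (-β ℓ t η) / ∑ η', w (t-1) η' * exp (-β ℓ t η')`.
Regret bound with negative stability terms. -/
theorem stmt_9 (N T : ℕ) (β : ℝ) (hβ : 0 < β)
    (ℓ : ℕ → Fin N → ℝ) (w : ℕ → Fin N → ℝ)
    (hw0pos : ∀ i, 0 < w 0 i) (hw0sum : ∑ i, w 0 i = 1)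
    (hupd : ∀ t, 1 ≤ t → ∀ i,
      w t i = w (t - 1) i * Real.exp (-β * ℓ t i) /
        ∑ j, w (t - 1) j * Real.exp (-β * ℓ t j)) :
    ∀ i : Fin N,
      ∑ t ∈ Icc 1 T, ((∑ j, w t j * ℓ t j) - ℓ t i) ≤
        (1 / β) * Real.log (1 / w 0 i) -
          (1 / (2 * β)) * ∑ t ∈ Icc 1 T, (∑ j, |w t j - w (t - 1) j|) ^ 2 := by
  intro i
  have hne : (Finset.univ : Finset (Fin N)).Nonempty := ⟨i, Finset.mem_univ i⟩
  -- positivity of all weights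
  have hwpos : ∀ t j, 0 < w t j := by
    intro t
    induction t with
    | zero => exact hw0pos
    | succ n ih =>
      intro j
      have hZ : 0 < ∑ j, w n j * Real.exp (-β * ℓ (n + 1) j) :=
        Finset.sum_pos (fun j _ => mul_pos (ih j) (Real.exp_pos _)) hne
      rw [hupd (n + 1) (by omega) j]
      simp only [Nat.add_sub_cancel]
      exact div_pos (mul_pos (ih j) (Real.exp_pos _)) hZ
  -- weights sum to one
  have hwsum : ∀ t, ∑ j, w t j = 1 := by
    intro t
    induction t with
    | zero => exact hw0sum
    | succ n ih =>
      have hZ : 0 < ∑ j, w n j * Real.exp (-β * ℓ (n + 1) j) :=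
        Finset.sum_pos (fun j _ => mul_pos (hwpos n j) (Real.exp_pos _)) hne
      calc ∑ j, w (n + 1) j
          = ∑ j, w n j * Real.exp (-β * ℓ (n + 1) j) /
              ∑ k, w n k * Real.exp (-β * ℓ (n + 1) k) := by
            refine Finset.sum_congr rfl fun j _ => ?_
            rw [hupd (n + 1) (by omega) j]
            simp only [Nat.add_sub_cancel]
        _ = 1 := by rw [← Finset.sum_div, div_self hZ.ne']
  -- per-round key inequality
  have key : ∀ t ∈ Icc 1 T,
      β * ((∑ j, w t j * ℓ t j) - ℓ t i) + (∑ j, |w t j - w (t - 1) j|) ^ 2 / 2 ≤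
        Real.log (w t i) - Real.log (w (t - 1) i) := by
    intro t ht
    have ht1 : 1 ≤ t := (Finset.mem_Icc.mp ht).1
    set Z : ℝ := ∑ j, w (t - 1) j * Real.exp (-β * ℓ t j) with hZdef
    have hZ : 0 < Z :=
      Finset.sum_pos (fun j _ => mul_pos (hwpos _ j) (Real.exp_pos _)) hne
    have hlog : ∀ j : Fin N, Real.log (w t j) - Real.log (w (t - 1) j) =
        -β * ℓ t j - Real.log Z := by
      intro j
      rw [hupd t ht1 j, Real.log_div (mul_pos (hwpos (t - 1) j) (Real.exp_pos _)).ne' hZ.ne',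
        Real.log_mul (hwpos (t - 1) j).ne' (Real.exp_pos _).ne', Real.log_exp]
      ring
    -- KL identity
    have hKL : ∑ j, w t j * Real.log (w t j / w (t - 1) j) =
        -β * (∑ j, w t j * ℓ t j) - Real.log Z := by
      have : ∀ j : Fin N, w t j * Real.log (w t j / w (t - 1) j) =
          -β * (w t j * ℓ t j) - w t j * Real.log Z := by
        intro j
        rw [Real.log_div (hwpos t j).ne' (hwpos (t - 1) j).ne', hlog j]
        ring
      rw [Finset.sum_congr rfl fun j _ => this j, Finset.sum_sub_distrib,
        ← Finset.mul_sum, ← Finset.sum_mul, hwsum t, one_mul]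
    have hpin := pinsker Finset.univ (w t) (w (t - 1))
      (fun j _ => hwpos t j) (fun j _ => hwpos (t - 1) j) (hwsum t) (hwsum (t - 1))
    have hlogi := hlog i
    rw [hKL] at hpin
    linarith
  -- sum up
  have hsum := Finset.sum_le_sum key
  -- telescoping on the RHS
  have htel : ∑ t ∈ Icc 1 T, (Real.log (w t i) - Real.log (w (t - 1) i)) =
      Real.log (w T i) - Real.log (w 0 i) := by
    rw [← Finset.Ico_add_one_right_eq_Icc, Finset.sum_Ico_eq_sum_range]
    simp only [Nat.add_sub_cancel, show T + 1 - 1 = T from rfl]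
    have : ∀ k, Real.log (w (1 + k) i) - Real.log (w (1 + k - 1) i) =
        Real.log (w (k + 1) i) - Real.log (w k i) := by
      intro k
      have e2 : 1 + k - 1 = k := by omega
      have e1 : 1 + k = k + 1 := by omega
      rw [e2, e1]
    rw [Finset.sum_congr rfl fun k _ => this k]
    exact Finset.sum_range_sub (fun k => Real.log (w k i)) T
  have hwT : Real.log (w T i) ≤ 0 := by
    apply Real.log_nonpos (hwpos T i).le
    calc w T i ≤ ∑ j, w T j :=
          Finset.single_le_sum (fun j _ => (hwpos T j).le) (Finset.mem_univ i)
      _ = 1 := hwsum T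
  rw [htel] at hsum
  -- split LHS sum
  have hsplit : ∑ t ∈ Icc 1 T,
      (β * ((∑ j, w t j * ℓ t j) - ℓ t i) + (∑ j, |w t j - w (t - 1) j|) ^ 2 / 2) =
      β * (∑ t ∈ Icc 1 T, ((∑ j, w t j * ℓ t j) - ℓ t i)) +
        (∑ t ∈ Icc 1 T, (∑ j, |w t j - w (t - 1) j|) ^ 2) / 2 := by
    rw [Finset.sum_add_distrib, ← Finset.mul_sum, Finset.sum_div]
  rw [hsplit] at hsum
  have hfin : β * (∑ t ∈ Icc 1 T, ((∑ j, w t j * ℓ t j) - ℓ t i)) ≤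
      -Real.log (w 0 i) - (∑ t ∈ Icc 1 T, (∑ j, |w t j - w (t - 1) j|) ^ 2) / 2 := by
    linarith
  rw [one_div (w 0 i), Real.log_inv]
  rw [← mul_le_mul_iff_right₀ hβ]
  have : β * ((1 / β) * -Real.log (w 0 i) -
      (1 / (2 * β)) * ∑ t ∈ Icc 1 T, (∑ j, |w t j - w (t - 1) j|) ^ 2) =
      -Real.log (w 0 i) - (∑ t ∈ Icc 1 T, (∑ j, |w t j - w (t - 1) j|) ^ 2) / 2 := by
    field_simp
  rw [this]
  exact hfin
end

section
/- Let X ⊆ ℝ^d be convex with diameter ≤ D, each f_t convex. For step size η > 0, let x_t^η = argmin_{x∈X}(f_t(x) + (1/(2η))‖x - x_{t-1}^η‖²). Then for any u_0, u_1, …, u_T ∈ X: Σ_{t=1}^T f_t(x_t^η) - Σ_{t=1}^T f_t(u_t) ≤ D²/(2η) + (D/η)Σ_{t=1}^T ‖u_t - u_{t-1}‖ - (1/(2η))Σ_{t=1}^T ‖x_t^η - x_{t-1}^η‖². -/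
open scoped RealInnerProductSpace

open Finset in
theorem stmt_11 {d : ℕ} (T : ℕ) (X : Set (EuclideanSpace ℝ (Fin d))) (hX : Convex ℝ X)
    (D : ℝ) (hD : ∀ a ∈ X, ∀ b ∈ X, ‖a - b‖ ≤ D)
    (f : ℕ → EuclideanSpace ℝ (Fin d) → ℝ)
    (hconv : ∀ t ∈ Icc 1 T, ConvexOn ℝ X (f t))
    (η : ℝ) (hη : 0 < η)
    (x u : ℕ → EuclideanSpace ℝ (Fin d))
    (hx0 : x 0 ∈ X) (hxX : ∀ t ∈ Icc 1 T, x t ∈ X)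
    (hu : ∀ t ≤ T, u t ∈ X)
    (hgreedy : ∀ t ∈ Icc 1 T, ∀ y ∈ X,
      f t (x t) + 1 / (2 * η) * ‖x t - x (t - 1)‖ ^ 2 ≤
        f t y + 1 / (2 * η) * ‖y - x (t - 1)‖ ^ 2) :
    ∑ t ∈ Icc 1 T, f t (x t) - ∑ t ∈ Icc 1 T, f t (u t) ≤
      D ^ 2 / (2 * η) + (D / η) * ∑ t ∈ Icc 1 T, ‖u t - u (t - 1)‖ -
        1 / (2 * η) * ∑ t ∈ Icc 1 T, ‖x t - x (t - 1)‖ ^ 2 := by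
  set c : ℝ := 1 / (2 * η) with hc_def
  have hc : 0 < c := by positivity
  have hD0 : 0 ≤ D := by
    have := hD (x 0) hx0 (x 0) hx0
    simpa using this
  have hxX' : ∀ t ≤ T, x t ∈ X := by
    intro t ht
    rcases Nat.eq_zero_or_pos t with h | h
    · simpa [h] using hx0
    · exact hxX t (mem_Icc.mpr ⟨h, ht⟩)
  -- per-step strong inequality
  have step : ∀ t ∈ Icc 1 T, ∀ v ∈ X,
      f t (x t) - f t v ≤
        c * (‖v - x (t-1)‖^2 - ‖x t - x (t-1)‖^2 - ‖v - x t‖^2) := by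
    intro t ht v hv
    set a := x t with ha_def
    set b := x (t-1) with hb_def
    have ha : a ∈ X := hxX t ht
    have hlam : ∀ l : ℝ, 0 < l → l ≤ 1 →
        f t a - f t v ≤ 2*c*⟪a - b, v - a⟫ + c * l * ‖v - a‖^2 := by
      intro l hl0 hl1
      have hy : (1-l) • a + l • v ∈ X := hX ha hv (sub_nonneg.mpr hl1) hl0.le (by ring)
      have h1 := hgreedy t ht _ hy
      rw [← ha_def, ← hb_def] at h1
      have h2 := (hconv t ht).2 ha hv (sub_nonneg.mpr hl1) hl0.le (by ring)
      simp only [smul_eq_mul] at h2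
      have hcomb : ((1-l) • a + l • v) - b = (a - b) + l • (v - a) := by
        simp [smul_sub, sub_smul]; abel
      have hexp : ‖((1-l) • a + l • v) - b‖^2
          = ‖a - b‖^2 + 2*(l*⟪a-b, v-a⟫) + l^2*‖v-a‖^2 := by
        rw [hcomb, norm_add_sq_real, real_inner_smul_right, norm_smul,
          Real.norm_eq_abs, mul_pow, sq_abs]
      have h3 : l * (f t a - f t v)
          ≤ l * (2*c*⟪a - b, v - a⟫ + c * l * ‖v - a‖^2) := by
        rw [hexp] at h1
        nlinarith [h1, h2, hl0, hc]
      exact le_of_mul_le_mul_left h3 hl0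
    have h4 : f t a - f t v ≤ 2*c*⟪a - b, v - a⟫ := by
      apply le_of_forall_pos_le_add
      intro ε hε
      set M := ‖v - a‖^2 with hM_def
      have hM : 0 ≤ M := by positivity
      set l : ℝ := min 1 (ε / (c * (M+1))) with hl_def
      have hden : 0 < c * (M+1) := by positivity
      have hl0 : 0 < l := lt_min one_pos (by positivity)
      have hl1 : l ≤ 1 := min_le_left _ _
      have := hlam l hl0 hl1
      have hsmall : c * l * M ≤ ε := by
        have h5 : l ≤ ε / (c * (M+1)) := min_le_right _ _
        have h6 : c * l * M ≤ c * (ε / (c * (M+1))) * M := by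
          have := mul_le_mul_of_nonneg_right (mul_le_mul_of_nonneg_left h5 hc.le) hM
          linarith
        have h7 : c * (ε / (c * (M+1))) * M ≤ ε := by
          rw [div_eq_mul_inv]
          rw [show c * (ε * (c * (M+1))⁻¹) * M = ε * (c * M) / (c * (M+1)) by
            field_simp]
          rw [div_le_iff₀ hden]
          nlinarith
        linarith
      linarith
    have hid : ‖v - b‖^2 - ‖a - b‖^2 - ‖v - a‖^2 = 2*⟪a - b, v - a⟫ := by
      have hvb : v - b = (v - a) + (a - b) := by abel
      have := norm_add_sq_real (v - a) (a - b)
      rw [← hvb] at this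
      rw [this, real_inner_comm]
      ring
    calc f t a - f t v ≤ 2*c*⟪a - b, v - a⟫ := h4
      _ = c * (‖v - b‖^2 - ‖a - b‖^2 - ‖v - a‖^2) := by rw [hid]; ring
  -- key telescoping inequality by induction
  have key : ∀ N, N ≤ T →
      ∑ t ∈ Icc 1 N, (f t (x t) - f t (u t)) ≤
        c * (‖u 0 - x 0‖^2 - ‖u N - x N‖^2)
          + 2*c*D * ∑ t ∈ Icc 1 N, ‖u t - u (t-1)‖
          - c * ∑ t ∈ Icc 1 N, ‖x t - x (t-1)‖^2 := by
    intro N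
    induction N with
    | zero => intro _; simp
    | succ N ih =>
      intro hNT
      have hN : N ≤ T := Nat.le_of_succ_le hNT
      have ihN := ih hN
      have hmem : N + 1 ∈ Icc 1 T := mem_Icc.mpr ⟨Nat.succ_le_succ (Nat.zero_le N), hNT⟩
      have hstep := step (N+1) hmem (u (N+1)) (hu (N+1) hNT)
      simp only [Nat.add_sub_cancel] at hstep
      -- bound ‖u (N+1) - x N‖² by ‖u N - x N‖² + 2D‖u (N+1) - u N‖
      have hbound : ‖u (N+1) - x N‖^2 ≤ ‖u N - x N‖^2 + 2*D*‖u (N+1) - u N‖ := by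
        have h1 : ‖u (N+1) - x N‖ - ‖u N - x N‖ ≤ ‖u (N+1) - u N‖ := by
          have := norm_sub_norm_le (u (N+1) - x N) (u N - x N)
          have heq : (u (N+1) - x N) - (u N - x N) = u (N+1) - u N := by abel
          rwa [heq] at this
        have h2 : ‖u (N+1) - x N‖ ≤ D := hD _ (hu (N+1) hNT) _ (hxX' N hN)
        have h3 : ‖u N - x N‖ ≤ D := hD _ (hu N hN) _ (hxX' N hN)
        have h4 : 0 ≤ ‖u (N+1) - x N‖ := norm_nonneg _
        have h5 : 0 ≤ ‖u N - x N‖ := norm_nonneg _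
        have h6 : 0 ≤ ‖u (N+1) - u N‖ := norm_nonneg _
        nlinarith
      rw [Finset.sum_Icc_succ_top (Nat.le_add_left 1 N),
        Finset.sum_Icc_succ_top (Nat.le_add_left 1 N),
        Finset.sum_Icc_succ_top (Nat.le_add_left 1 N)]
      simp only [Nat.add_sub_cancel]
      nlinarith [hstep, ihN, hbound]
  have hkey := key T le_rfl
  rw [Finset.sum_sub_distrib] at hkey
  have hu0 : ‖u 0 - x 0‖^2 ≤ D^2 := by
    have h1 := hD (u 0) (hu 0 (Nat.zero_le T)) (x 0) hx0
    nlinarith [norm_nonneg (u 0 - x 0)]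
  have huT : 0 ≤ ‖u T - x T‖^2 := by positivity
  have hDc : D^2 / (2*η) = c * D^2 := by rw [hc_def]; ring
  have hDc2 : D / η = 2*c*D := by rw [hc_def]; field_simp
  rw [hDc, hDc2]
  nlinarith [hkey, hu0, huT, hc]
end

section
/- Under the setting of the previous lemma (convex f_t on convex X with diameter D, implicit updates x_t^η), the dynamic regret with switching cost satisfies: Σ_{t=1}^T (f_t(x_t^η) + ‖x_t^η - x_{t-1}^η‖) - Σ_{t=1}^T f_t(u_t) ≤ D²/(2η) + (D/η)Σ_{t=1}^T ‖u_t - u_{t-1}‖ + ηT/2, for any u_0, …, u_T ∈ X. -/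
lemma combo_norm {d : ℕ} (a b : EuclideanSpace ℝ (Fin d)) (θ : ℝ) :
    ‖(1-θ) • a + θ • b‖^2 = (1-θ)*‖a‖^2 + θ*‖b‖^2 - θ*(1-θ)*‖a-b‖^2 := by
  have h : ∀ v : EuclideanSpace ℝ (Fin d), ‖v‖^2 = inner ℝ v v :=
    fun v => (real_inner_self_eq_norm_sq v).symm
  rw [h, h, h, h]
  simp only [inner_add_left, inner_add_right, inner_sub_left, inner_sub_right,
    real_inner_smul_left, real_inner_smul_right]
  rw [real_inner_comm b a]
  ring

lemma tel_aux (g : ℕ → ℝ) (T : ℕ) :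
    ∑ t ∈ Finset.Icc 1 T, (g (t-1) - g t) = g 0 - g T := by
  induction T with
  | zero => simp
  | succ n ih =>
      rw [Finset.sum_Icc_succ_top (by omega), ih]
      have hn : n + 1 - 1 = n := by omega
      rw [hn]; ring

set_option maxHeartbeats 1000000 in
open Finset in
theorem stmt_12 {d : ℕ} (T : ℕ) (X : Set (EuclideanSpace ℝ (Fin d))) (hX : Convex ℝ X)
    (D : ℝ) (hD : ∀ a ∈ X, ∀ b ∈ X, ‖a - b‖ ≤ D)
    (f : ℕ → EuclideanSpace ℝ (Fin d) → ℝ)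
    (hconv : ∀ t ∈ Icc 1 T, ConvexOn ℝ X (f t))
    (η : ℝ) (hη : 0 < η)
    (x u : ℕ → EuclideanSpace ℝ (Fin d))
    (hx0 : x 0 ∈ X) (hxX : ∀ t ∈ Icc 1 T, x t ∈ X)
    (hu : ∀ t ≤ T, u t ∈ X)
    (hgreedy : ∀ t ∈ Icc 1 T, ∀ y ∈ X,
      f t (x t) + 1 / (2 * η) * ‖x t - x (t - 1)‖ ^ 2 ≤
        f t y + 1 / (2 * η) * ‖y - x (t - 1)‖ ^ 2) :
    ∑ t ∈ Icc 1 T, (f t (x t) + ‖x t - x (t - 1)‖) - ∑ t ∈ Icc 1 T, f t (u t) ≤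
      D ^ 2 / (2 * η) + (D / η) * ∑ t ∈ Icc 1 T, ‖u t - u (t - 1)‖ + η * T / 2 := by
  have hηne : η ≠ 0 := ne_of_gt hη
  have hk0 : (0:ℝ) ≤ 1 / (2 * η) := by positivity
  have hD0 : (0:ℝ) ≤ D := by
    have := hD (x 0) hx0 (x 0) hx0
    simpa using this
  -- membership of x (t-1)
  have hxprev : ∀ t ∈ Icc 1 T, x (t - 1) ∈ X := by
    intro t ht
    obtain ⟨ht1, ht2⟩ := mem_Icc.mp ht
    obtain ⟨s, rfl⟩ := Nat.exists_eq_add_of_le ht1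
    cases s with
    | zero => simpa using hx0
    | succ n =>
        have : (1 + (n+1)) - 1 = n + 1 := by omega
        rw [this]
        exact hxX (n+1) (mem_Icc.mpr ⟨by omega, by omega⟩)
  set g : ℕ → ℝ := fun t => ‖u t - x t‖^2 with hg
  -- strong optimality
  have strong : ∀ t ∈ Icc 1 T,
      f t (x t) + 1 / (2 * η) * ‖x t - x (t - 1)‖ ^ 2 ≤
        f t (u t) + 1 / (2 * η) * ‖u t - x (t - 1)‖ ^ 2 - 1 / (2 * η) * ‖u t - x t‖ ^ 2 := by
    intro t ht
    obtain ⟨ht1, ht2⟩ := mem_Icc.mp ht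
    have hxt : x t ∈ X := hxX t ht
    have hut : u t ∈ X := hu t ht2
    set c2 : ℝ := ‖u t - x t‖^2 with hc2
    have hc2nn : 0 ≤ c2 := by positivity
    have key : ∀ ε > (0:ℝ),
        f t (x t) + 1 / (2 * η) * ‖x t - x (t - 1)‖ ^ 2 ≤
          (f t (u t) + 1 / (2 * η) * ‖u t - x (t - 1)‖ ^ 2 - 1 / (2 * η) * c2) + ε := by
      intro ε hε
      set θ : ℝ := min 1 (2*η*ε/(c2+1)) with hθ
      have hc2p : (0:ℝ) < c2 + 1 := by linarith
      have hθ0 : 0 < θ := lt_min one_pos (by positivity)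
      have hθ1 : θ ≤ 1 := min_le_left _ _
      have hθle : θ * (c2 + 1) ≤ 2*η*ε := by
        have h1 : θ ≤ 2*η*ε/(c2+1) := min_le_right _ _
        calc θ * (c2+1) ≤ (2*η*ε/(c2+1)) * (c2+1) :=
              mul_le_mul_of_nonneg_right h1 (le_of_lt hc2p)
          _ = 2*η*ε := by field_simp
      set z := (1-θ) • x t + θ • u t with hz
      have hzX : z ∈ X := hX hxt hut (by linarith) (le_of_lt hθ0) (by ring)
      have hgr := hgreedy t ht z hzX
      have hfz : f t z ≤ (1-θ) * f t (x t) + θ * f t (u t) :=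
        (hconv t ht).2 hxt hut (by linarith) (le_of_lt hθ0) (by ring)
      have hzeq : z - x (t-1) = (1-θ) • (x t - x (t-1)) + θ • (u t - x (t-1)) := by
        rw [hz]; module
      have hnorm : ‖z - x (t-1)‖^2 =
          (1-θ)*‖x t - x (t-1)‖^2 + θ*‖u t - x (t-1)‖^2 - θ*(1-θ)*c2 := by
        rw [hzeq, combo_norm]
        have : x t - x (t-1) - (u t - x (t-1)) = -(u t - x t) := by abel
        rw [this, norm_neg, hc2]
      rw [hnorm] at hgr
      have h1 : f t (x t) + 1 / (2 * η) * ‖x t - x (t - 1)‖ ^ 2 ≤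
          (1-θ) * f t (x t) + θ * f t (u t) +
            1 / (2 * η) * ((1-θ)*‖x t - x (t-1)‖^2 + θ*‖u t - x (t-1)‖^2 - θ*(1-θ)*c2) := by
        linarith
      have h2 : θ * (f t (x t) + 1 / (2 * η) * ‖x t - x (t - 1)‖ ^ 2) ≤
          θ * (f t (u t) + 1 / (2 * η) * ‖u t - x (t - 1)‖ ^ 2 - 1 / (2 * η) * (1-θ) * c2) := by
        nlinarith [h1]
      have h3 : f t (x t) + 1 / (2 * η) * ‖x t - x (t - 1)‖ ^ 2 ≤
          f t (u t) + 1 / (2 * η) * ‖u t - x (t - 1)‖ ^ 2 - 1 / (2 * η) * (1-θ) * c2 :=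
        le_of_mul_le_mul_left (by linarith [h2]) hθ0
      have h4 : 1 / (2 * η) * (θ * c2) ≤ ε := by
        have hθnn : 0 ≤ θ := le_of_lt hθ0
        have : θ * c2 ≤ 2*η*ε := by nlinarith
        calc 1 / (2 * η) * (θ * c2) ≤ 1 / (2 * η) * (2*η*ε) :=
              mul_le_mul_of_nonneg_left this hk0
          _ = ε := by field_simp
      nlinarith [h3, h4]
    -- take ε → 0
    have := le_of_forall_pos_le_add key
    linarith [this]
  -- per-step bound
  have per : ∀ t ∈ Icc 1 T,
      (f t (x t) + ‖x t - x (t - 1)‖) - f t (u t) ≤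
        η/2 + (D/η) * ‖u t - u (t - 1)‖ + 1/(2*η) * (g (t-1) - g t) := by
    intro t ht
    obtain ⟨ht1, ht2⟩ := mem_Icc.mp ht
    have hA := strong t ht
    -- AM-GM
    have hB : ‖x t - x (t-1)‖ ≤ η/2 + 1/(2*η) * ‖x t - x (t-1)‖^2 := by
      rw [← sub_nonneg]
      have h : η/2 + 1/(2*η) * ‖x t - x (t-1)‖^2 - ‖x t - x (t-1)‖
          = (‖x t - x (t-1)‖ - η)^2 / (2*η) := by field_simp; ring
      rw [h]
      positivity
    -- distance comparison
    have hup : u (t-1) ∈ X := hu (t-1) (le_trans (Nat.sub_le t 1) ht2)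
    have hxp : x (t-1) ∈ X := hxprev t ht
    have ha : ‖u t - x (t-1)‖ ≤ D := hD _ (hu t ht2) _ hxp
    have hcD : ‖u (t-1) - x (t-1)‖ ≤ D := hD _ hup _ hxp
    have htri : ‖u t - x (t-1)‖ ≤ ‖u (t-1) - x (t-1)‖ + ‖u t - u (t-1)‖ := by
      have : u t - x (t-1) = (u (t-1) - x (t-1)) + (u t - u (t-1)) := by abel
      rw [this]; exact norm_add_le _ _
    have hC : ‖u t - x (t-1)‖^2 ≤ ‖u (t-1) - x (t-1)‖^2 + 2*D*‖u t - u (t-1)‖ := by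
      nlinarith [norm_nonneg (u t - x (t-1)), norm_nonneg (u (t-1) - x (t-1)),
        norm_nonneg (u t - u (t-1))]
    have hkC := mul_le_mul_of_nonneg_left hC hk0
    have heq : 1/(2*η) * (2*D*‖u t - u (t-1)‖) = (D/η) * ‖u t - u (t-1)‖ := by
      field_simp
    have hgdef : g (t-1) = ‖u (t-1) - x (t-1)‖^2 ∧ g t = ‖u t - x t‖^2 := ⟨rfl, rfl⟩
    obtain ⟨hg1, hg2⟩ := hgdef
    rw [hg1, hg2]
    nlinarith [hA, hB, hkC, heq]
  -- telescoping
  have htel : ∑ t ∈ Icc 1 T, (g (t-1) - g t) = g 0 - g T := tel_aux g T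
  have hsum : ∑ t ∈ Icc 1 T, ((f t (x t) + ‖x t - x (t - 1)‖) - f t (u t)) ≤
      ∑ t ∈ Icc 1 T, (η/2 + (D/η) * ‖u t - u (t - 1)‖ + 1/(2*η) * (g (t-1) - g t)) :=
    Finset.sum_le_sum per
  rw [← Finset.sum_sub_distrib]
  have hexpand : ∑ t ∈ Icc 1 T, (η/2 + (D/η) * ‖u t - u (t - 1)‖ + 1/(2*η) * (g (t-1) - g t))
      = T * (η/2) + (D/η) * ∑ t ∈ Icc 1 T, ‖u t - u (t - 1)‖ + 1/(2*η) * (g 0 - g T) := by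
    rw [Finset.sum_add_distrib, Finset.sum_add_distrib, ← Finset.mul_sum, ← Finset.mul_sum,
      htel, Finset.sum_const, Nat.card_Icc]
    simp [nsmul_eq_mul]
  rw [hexpand] at hsum
  have hg0 : g 0 ≤ D^2 := by
    have h := hD (u 0) (hu 0 (Nat.zero_le T)) (x 0) hx0
    have : (0:ℝ) ≤ ‖u 0 - x 0‖ := norm_nonneg _
    show ‖u 0 - x 0‖^2 ≤ D^2
    nlinarith
  have hgT : 0 ≤ g T := by positivity
  have hfin : 1/(2*η) * (g 0 - g T) ≤ D^2 / (2*η) := by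
    rw [div_eq_mul_one_div (D^2), mul_comm (D^2)]
    apply mul_le_mul_of_nonneg_left _ hk0
    linarith
  calc ∑ t ∈ Icc 1 T, ((f t (x t) + ‖x t - x (t - 1)‖) - f t (u t))
      ≤ T * (η/2) + (D/η) * ∑ t ∈ Icc 1 T, ‖u t - u (t - 1)‖ + 1/(2*η) * (g 0 - g T) := hsum
    _ ≤ D ^ 2 / (2 * η) + (D / η) * ∑ t ∈ Icc 1 T, ‖u t - u (t - 1)‖ + η * T / 2 := by
        have : (T:ℝ) * (η/2) = η * T / 2 := by ring
        linarith [hfin]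
end

section
/- Let X ⊆ ℝ^d be convex with diameter ≤ D, f_t convex with ‖∇f_t(x)‖ ≤ G on X, and let x_{t+1}^η = Π_X[x_t^η - η∇f_t(x_t)] be projected online gradient descent on the linearized losses s_t(x) = ⟨∇f_t(x_t), x - x_t⟩. Then for any u_1, …, u_T ∈ X (with u_0 = u_1 convention): Σ_{t=1}^T (s_t(x_t^η) + ‖x_t^η - x_{t-1}^η‖) - Σ_{t=1}^T s_t(u_t) ≤ D²/(2η) + (D/η)Σ_{t=1}^T ‖u_t - u_{t-1}‖ + ηT(G²/2 + G). -/
set_option maxHeartbeats 1000000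

lemma obtuse_of_min {d : ℕ} {X : Set (EuclideanSpace ℝ (Fin d))} (hX : Convex ℝ X)
    {p z : EuclideanSpace ℝ (Fin d)} (hp : p ∈ X)
    (hmin : ∀ y ∈ X, ‖p - z‖ ≤ ‖y - z‖) :
    ∀ y ∈ X, inner ℝ (z - p) (y - p) ≤ (0 : ℝ) := by
  haveI : Nonempty X := ⟨⟨p, hp⟩⟩
  have hbdd : BddBelow (Set.range fun w : X => ‖z - (w : EuclideanSpace ℝ (Fin d))‖) := by
    refine ⟨0, ?_⟩
    rintro a ⟨w, rfl⟩
    exact norm_nonneg _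
  have h : ‖z - p‖ = ⨅ w : X, ‖z - (w : EuclideanSpace ℝ (Fin d))‖ := by
    refine le_antisymm (le_ciInf fun w => ?_) (ciInf_le hbdd ⟨p, hp⟩)
    rw [norm_sub_rev z p, norm_sub_rev z (w : EuclideanSpace ℝ (Fin d))]
    exact hmin w w.2
  exact (norm_eq_iInf_iff_real_inner_le_zero hX hp).mp h

lemma ogd_step {d : ℕ} {X : Set (EuclideanSpace ℝ (Fin d))} (hX : Convex ℝ X)
    {p xt gt u : EuclideanSpace ℝ (Fin d)} {η : ℝ}
    (hp : p ∈ X) (hu : u ∈ X)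
    (hmin : ∀ y ∈ X, ‖p - (xt - η • gt)‖ ≤ ‖y - (xt - η • gt)‖) :
    2 * η * (inner ℝ gt (xt - u) : ℝ) ≤ ‖xt - u‖ ^ 2 - ‖p - u‖ ^ 2 + η ^ 2 * ‖gt‖ ^ 2 := by
  set z := xt - η • gt with hz
  have hobt : (inner ℝ (z - p) (u - p) : ℝ) ≤ 0 := obtuse_of_min hX hp hmin u hu
  have h1 : ‖p - u‖ ^ 2 ≤ ‖z - u‖ ^ 2 := by
    have hexp : ‖z - u‖ ^ 2 = ‖z - p‖ ^ 2 + 2 * (inner ℝ (z - p) (p - u) : ℝ) + ‖p - u‖ ^ 2 := by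
      have : z - u = (z - p) + (p - u) := by abel
      rw [this, norm_add_sq_real]
    have h2 : (0:ℝ) ≤ (inner ℝ (z - p) (p - u) : ℝ) := by
      have : (inner ℝ (z - p) (p - u) : ℝ) = -(inner ℝ (z - p) (u - p) : ℝ) := by
        rw [← inner_neg_right]; congr 1; abel
      linarith [this ▸ neg_nonneg.mpr hobt]
    nlinarith [sq_nonneg ‖z - p‖]
  have h3 : ‖z - u‖ ^ 2 = ‖xt - u‖ ^ 2 - 2 * η * (inner ℝ gt (xt - u) : ℝ) + η ^ 2 * ‖gt‖ ^ 2 := by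
    have : z - u = (xt - u) - η • gt := by rw [hz]; abel
    rw [this, norm_sub_sq_real, real_inner_smul_right, norm_smul, Real.norm_eq_abs,
      mul_pow, sq_abs, real_inner_comm]
    ring
  nlinarith

lemma ogd_switch {d : ℕ} {X : Set (EuclideanSpace ℝ (Fin d))} (hX : Convex ℝ X)
    {p xt gt : EuclideanSpace ℝ (Fin d)} {η : ℝ} (hη : 0 < η)
    (hp : p ∈ X) (hxt : xt ∈ X)
    (hmin : ∀ y ∈ X, ‖p - (xt - η • gt)‖ ≤ ‖y - (xt - η • gt)‖) :
    ‖p - xt‖ ≤ η * ‖gt‖ := by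
  set z := xt - η • gt with hz
  have hobt : (inner ℝ (z - p) (xt - p) : ℝ) ≤ 0 := obtuse_of_min hX hp hmin xt hxt
  have key : ‖xt - p‖ ^ 2 ≤ η * ‖gt‖ * ‖xt - p‖ := by
    have h1 : ‖xt - p‖ ^ 2 = (inner ℝ (xt - z) (xt - p) : ℝ) + (inner ℝ (z - p) (xt - p) : ℝ) := by
      rw [← inner_add_left]
      have : (xt - z) + (z - p) = xt - p := by abel
      rw [this, real_inner_self_eq_norm_sq]
    have h2 : (inner ℝ (xt - z) (xt - p) : ℝ) ≤ η * ‖gt‖ * ‖xt - p‖ := by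
      have hxz : xt - z = η • gt := by rw [hz]; abel
      calc (inner ℝ (xt - z) (xt - p) : ℝ) ≤ ‖xt - z‖ * ‖xt - p‖ := real_inner_le_norm _ _
        _ = η * ‖gt‖ * ‖xt - p‖ := by
            rw [hxz, norm_smul, Real.norm_eq_abs, abs_of_pos hη]
    linarith
  rcases eq_or_lt_of_le (norm_nonneg (xt - p)) with h | h
  · rw [norm_sub_rev]; rw [← h]; positivity
  · rw [norm_sub_rev]
    nlinarith

open Finset in
/-- Projected online gradient descent on linearized losses `s t y = ⟪g t, y - xc t⟫`,
where `g t` is the gradient of `f t` at the meta point `xc t`, bounded by `G`.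
The update is `x (t+1) = Π_X [x t - η • g t]`, characterized as the closest point of `X`. -/
theorem stmt_13 {d : ℕ} (T : ℕ) (X : Set (EuclideanSpace ℝ (Fin d))) (hX : Convex ℝ X)
    (D G : ℝ) (hD : ∀ a ∈ X, ∀ b ∈ X, ‖a - b‖ ≤ D)
    (η : ℝ) (hη : 0 < η)
    (f : ℕ → EuclideanSpace ℝ (Fin d) → ℝ)
    (hconv : ∀ t ∈ Icc 1 T, ConvexOn ℝ X (f t))
    (xc : ℕ → EuclideanSpace ℝ (Fin d))
    (g : ℕ → EuclideanSpace ℝ (Fin d))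
    (hgrad : ∀ t ∈ Icc 1 T, HasGradientAt (f t) (g t) (xc t))
    (hG : ∀ t, ‖g t‖ ≤ G)
    (s : ℕ → EuclideanSpace ℝ (Fin d) → ℝ)
    (hs : ∀ t, ∀ y, s t y = inner ℝ (g t) (y - xc t))
    (x u : ℕ → EuclideanSpace ℝ (Fin d))
    (hx0 : x 0 ∈ X) (hxX : ∀ t, x t ∈ X)
    (hproj : ∀ t : ℕ, ∀ y ∈ X,
      ‖x (t + 1) - (x t - η • g t)‖ ≤ ‖y - (x t - η • g t)‖)
    (hu : ∀ t ≤ T, u t ∈ X) (hu01 : u 0 = u 1) :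
    ∑ t ∈ Icc 1 T, (s t (x t) + ‖x t - x (t - 1)‖) - ∑ t ∈ Icc 1 T, s t (u t) ≤
      D ^ 2 / (2 * η) + (D / η) * ∑ t ∈ Icc 1 T, ‖u t - u (t - 1)‖ +
        η * T * (G ^ 2 / 2 + G) := by
  have hD0 : 0 ≤ D := by simpa using hD (x 0) hx0 (x 0) hx0
  have hG0 : 0 ≤ G := le_trans (norm_nonneg _) (hG 0)
  set A : ℕ → ℝ := fun t => ‖x t - u t‖ ^ 2 with hA
  set F : ℕ → ℝ := fun t => ‖x (t + 1) - u t‖ ^ 2 with hF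
  -- per-step linear regret bound
  have hstep : ∀ t ∈ Icc 1 T, s t (x t) - s t (u t) ≤ (A t - F t) / (2 * η) + η * G ^ 2 / 2 := by
    intro t ht
    rw [mem_Icc] at ht
    have hdiff : s t (x t) - s t (u t) = (inner ℝ (g t) (x t - u t) : ℝ) := by
      rw [hs t (x t), hs t (u t), ← inner_sub_right]
      congr 1
      abel
    have hkey := ogd_step hX (hxX (t + 1)) (hu t ht.2) (hproj t)
    have hg2 : ‖g t‖ ^ 2 ≤ G ^ 2 := by nlinarith [hG t, norm_nonneg (g t)]
    rw [hdiff]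
    rw [div_add' _ _ _ (by positivity), le_div_iff₀ (by positivity : (0:ℝ) < 2 * η)]
    have : (A t - F t + η * G ^ 2 / 2 * (2 * η)) = A t - F t + η ^ 2 * G ^ 2 := by ring
    rw [this]
    have : (2 : ℝ) * η * (inner ℝ (g t) (x t - u t) : ℝ)
        ≤ A t - F t + η ^ 2 * ‖g t‖ ^ 2 := hkey
    nlinarith [sq_nonneg η]
  -- switching cost
  have hswitch : ∀ t ∈ Icc 1 T, ‖x t - x (t - 1)‖ ≤ η * G := by
    intro t ht
    rw [mem_Icc] at ht
    obtain ⟨k, rfl⟩ := Nat.exists_eq_add_of_le ht.1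
    have h1 : ‖x (k + 1) - x k‖ ≤ η * ‖g k‖ :=
      ogd_switch hX hη (hxX (k + 1)) (hxX k) (hproj k)
    have e1 : 1 + k = k + 1 := by omega
    have e2 : 1 + k - 1 = k := by omega
    rw [e2, e1]
    calc ‖x (k + 1) - x k‖ ≤ η * ‖g k‖ := h1
      _ ≤ η * G := by nlinarith [hG k]
  -- telescoping bound on ∑ (A t - F t)
  have htel : ∑ t ∈ Icc 1 T, (A t - F t) ≤ D ^ 2 + 2 * D * ∑ t ∈ Icc 1 T, ‖u t - u (t - 1)‖ := by
    have hsplit : ∀ t ∈ Icc 1 T, A t - F t = (F (t - 1) - F t) + (A t - F (t - 1)) := by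
      intro t ht; ring
    rw [Finset.sum_congr rfl hsplit, Finset.sum_add_distrib]
    have h1 : ∑ t ∈ Icc 1 T, (F (t - 1) - F t) = F 0 - F T := by
      rw [← Finset.Ico_add_one_right_eq_Icc, Finset.sum_Ico_eq_sum_range]
      simp only [Nat.succ_sub_one, Nat.add_sub_cancel]
      have : ∀ i ∈ range T, F (1 + i - 1) - F (1 + i) = F i - F (i + 1) := by
        intro i _
        have e1 : 1 + i - 1 = i := by omega
        have e2 : 1 + i = i + 1 := by omega
        rw [e1, e2]
      rw [Finset.sum_congr rfl this, Finset.sum_range_sub']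
    have h2 : F 0 - F T ≤ D ^ 2 := by
      rcases Nat.eq_zero_or_pos T with rfl | hT
      · simp [sq_nonneg D]
      · have hF0 : F 0 ≤ D ^ 2 := by
          have hu0 : u 0 ∈ X := hu01 ▸ hu 1 hT
          have := hD (x 1) (hxX 1) (u 0) hu0
          simp only [hF]
          nlinarith [norm_nonneg (x 1 - u 0)]
        have : (0:ℝ) ≤ F T := sq_nonneg _
        linarith
    have h3 : ∑ t ∈ Icc 1 T, (A t - F (t - 1)) ≤
        ∑ t ∈ Icc 1 T, 2 * D * ‖u t - u (t - 1)‖ := by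
      refine Finset.sum_le_sum fun t ht => ?_
      rw [mem_Icc] at ht
      have ht1 : t - 1 + 1 = t := by omega
      have hut : u t ∈ X := hu t ht.2
      have hut1 : u (t - 1) ∈ X := hu (t - 1) (by omega)
      have hAt : A t = ‖x t - u t‖ ^ 2 := rfl
      have hFt1 : F (t - 1) = ‖x t - u (t - 1)‖ ^ 2 := by
        simp only [hF, ht1]
      rw [hAt, hFt1]
      have hab : ‖x t - u t‖ - ‖x t - u (t - 1)‖ ≤ ‖u t - u (t - 1)‖ := by
        have heq : (x t - u t) - (x t - u (t - 1)) = u (t - 1) - u t := by abel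
        calc ‖x t - u t‖ - ‖x t - u (t - 1)‖
            ≤ ‖(x t - u t) - (x t - u (t - 1))‖ := norm_sub_norm_le _ _
          _ = ‖u t - u (t - 1)‖ := by rw [heq]; exact norm_sub_rev _ _
      have h4 : ‖x t - u t‖ ≤ D := hD _ (hxX t) _ hut
      have h5 : ‖x t - u (t - 1)‖ ≤ D := hD _ (hxX t) _ hut1
      nlinarith [norm_nonneg (x t - u t), norm_nonneg (x t - u (t - 1)),
        norm_nonneg (u t - u (t - 1))]
    rw [← Finset.mul_sum] at h3
    linarith
  -- assemble
  have hLHS : ∑ t ∈ Icc 1 T, (s t (x t) + ‖x t - x (t - 1)‖) - ∑ t ∈ Icc 1 T, s t (u t)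
      = ∑ t ∈ Icc 1 T, (s t (x t) - s t (u t)) + ∑ t ∈ Icc 1 T, ‖x t - x (t - 1)‖ := by
    rw [Finset.sum_add_distrib, Finset.sum_sub_distrib]
    ring
  rw [hLHS]
  have hcard : (Icc 1 T).card = T := by rw [Nat.card_Icc]; omega
  have hb1 : ∑ t ∈ Icc 1 T, (s t (x t) - s t (u t))
      ≤ (∑ t ∈ Icc 1 T, (A t - F t)) / (2 * η) + T * (η * G ^ 2 / 2) := by
    calc ∑ t ∈ Icc 1 T, (s t (x t) - s t (u t))
        ≤ ∑ t ∈ Icc 1 T, ((A t - F t) / (2 * η) + η * G ^ 2 / 2) :=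
          Finset.sum_le_sum hstep
      _ = (∑ t ∈ Icc 1 T, (A t - F t)) / (2 * η) + T * (η * G ^ 2 / 2) := by
          rw [Finset.sum_add_distrib, Finset.sum_const, hcard, Finset.sum_div]
          simp [nsmul_eq_mul]
  have hb2 : ∑ t ∈ Icc 1 T, ‖x t - x (t - 1)‖ ≤ T * (η * G) := by
    calc ∑ t ∈ Icc 1 T, ‖x t - x (t - 1)‖ ≤ ∑ t ∈ Icc 1 T, η * G :=
          Finset.sum_le_sum hswitch
      _ = T * (η * G) := by rw [Finset.sum_const, hcard, nsmul_eq_mul]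
  have hdiv : (∑ t ∈ Icc 1 T, (A t - F t)) / (2 * η)
      ≤ (D ^ 2 + 2 * D * ∑ t ∈ Icc 1 T, ‖u t - u (t - 1)‖) / (2 * η) :=
    (div_le_div_iff_of_pos_right (by positivity)).mpr htel
  have hfin : (D ^ 2 + 2 * D * ∑ t ∈ Icc 1 T, ‖u t - u (t - 1)‖) / (2 * η)
      + (T : ℝ) * (η * G ^ 2 / 2) + (T : ℝ) * (η * G)
      = D ^ 2 / (2 * η) + (D / η) * ∑ t ∈ Icc 1 T, ‖u t - u (t - 1)‖
        + η * T * (G ^ 2 / 2 + G) := by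
    field_simp
    ring
  linarith
end

section
/- Suppose each f_t is nonnegative with λ-quadratic growth and minimizer v_t, and x_t = v_t with x_0 = u_0. Then for any ρ > 0 and any u_0, …, u_T ∈ X: Σ_{t=1}^T (f_t(x_t) + ½‖x_t - x_{t-1}‖²) ≤ (4/λ)(1 + 1/ρ)Σ_{t=1}^T f_t(u_t) + ((1+ρ)/2)Σ_{t=1}^T ‖u_t - u_{t-1}‖² + (1 - (4/λ)(1 + 1/ρ))Σ_{t=1}^T f_t(x_t). -/
set_option maxHeartbeats 1000000

open Finset in
lemma shift_sum_aux (g : ℕ → ℝ) (hg0 : g 0 = 0) (T : ℕ) :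
    ∑ t ∈ Icc 1 T, (g t + g (t - 1)) ≤ 2 * ∑ t ∈ Icc 1 T, g t - g T := by
  induction T with
  | zero => simp [hg0]
  | succ n ih =>
    rw [Finset.sum_Icc_succ_top (by omega), Finset.sum_Icc_succ_top (by omega)]
    simp only [Nat.add_sub_cancel]
    linarith

open Finset in
theorem stmt_16 {d : ℕ} (T : ℕ) (X : Set (EuclideanSpace ℝ (Fin d)))
    (f : ℕ → EuclideanSpace ℝ (Fin d) → ℝ)
    (v x u : ℕ → EuclideanSpace ℝ (Fin d))
    (lam ρ : ℝ) (hlam : 0 < lam) (hρ : 0 < ρ)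
    (hu : ∀ t ≤ T, u t ∈ X)
    (hvX : ∀ t ∈ Icc 1 T, v t ∈ X)
    (hnonneg : ∀ t ∈ Icc 1 T, ∀ y ∈ X, 0 ≤ f t y)
    (hmin : ∀ t ∈ Icc 1 T, ∀ y ∈ X, f t (v t) ≤ f t y)
    (hqg : ∀ t ∈ Icc 1 T, ∀ y ∈ X, f t y - f t (v t) ≥ lam / 2 * ‖y - v t‖ ^ 2)
    (hx : ∀ t ∈ Icc 1 T, x t = v t)
    (hx0 : x 0 = u 0) :
    ∑ t ∈ Icc 1 T, (f t (x t) + 1 / 2 * ‖x t - x (t - 1)‖ ^ 2) ≤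
      (4 / lam) * (1 + 1 / ρ) * ∑ t ∈ Icc 1 T, f t (u t) +
        (1 + ρ) / 2 * ∑ t ∈ Icc 1 T, ‖u t - u (t - 1)‖ ^ 2 +
        (1 - (4 / lam) * (1 + 1 / ρ)) * ∑ t ∈ Icc 1 T, f t (x t) := by
  set g : ℕ → ℝ := fun t => ‖x t - u t‖ ^ 2 with hg
  have hg0 : g 0 = 0 := by simp [hg, hx0]
  have hgnn : ∀ t, 0 ≤ g t := fun t => by positivity
  -- step 1 : termwise
  have step1 : ∀ t ∈ Icc 1 T,
      1 / 2 * ‖x t - x (t - 1)‖ ^ 2 ≤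
        (1 + ρ) / 2 * ‖u t - u (t - 1)‖ ^ 2 + (1 + 1 / ρ) * (g t + g (t - 1)) := by
    intro t _
    set a := u t - u (t - 1)
    set b := (x t - u t) - (x (t - 1) - u (t - 1))
    have hab : x t - x (t - 1) = a + b := by simp [a, b]; abel
    have h1 : ‖x t - x (t - 1)‖ ≤ ‖a‖ + ‖b‖ := by rw [hab]; exact norm_add_le a b
    have h2 : ‖b‖ ≤ ‖x t - u t‖ + ‖x (t - 1) - u (t - 1)‖ := norm_sub_le _ _
    have e1 : g t = ‖x t - u t‖ ^ 2 := rfl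
    have e2 : g (t - 1) = ‖x (t - 1) - u (t - 1)‖ ^ 2 := rfl
    have h3 : (0:ℝ) ≤ ‖b‖ := norm_nonneg _
    have hbsq : ‖b‖ ^ 2 ≤ 2 * (g t + g (t - 1)) := by
      rw [e1, e2]
      nlinarith [norm_nonneg (x t - u t), norm_nonneg (x (t - 1) - u (t - 1)),
        sq_nonneg (‖x t - u t‖ - ‖x (t - 1) - u (t - 1)‖)]
    have h5 : 2 * ‖a‖ * ‖b‖ ≤ ρ * ‖a‖ ^ 2 + 1 / ρ * ‖b‖ ^ 2 := by
      have h6 : 2 * ‖a‖ * ‖b‖ = (2 * ρ * ‖a‖ * ‖b‖) / ρ := by field_simp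
      have h7 : ρ * ‖a‖ ^ 2 + 1 / ρ * ‖b‖ ^ 2 = (ρ ^ 2 * ‖a‖ ^ 2 + ‖b‖ ^ 2) / ρ := by
        field_simp
      rw [h6, h7]
      gcongr
      nlinarith [sq_nonneg (ρ * ‖a‖ - ‖b‖)]
    have hyoung : ‖x t - x (t - 1)‖ ^ 2 ≤ (1 + ρ) * ‖a‖ ^ 2 + (1 + 1 / ρ) * ‖b‖ ^ 2 := by
      have h4 : ‖x t - x (t - 1)‖ ^ 2 ≤ (‖a‖ + ‖b‖) ^ 2 := by
        nlinarith [norm_nonneg a, norm_nonneg b, norm_nonneg (x t - x (t - 1))]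
      nlinarith
    have hrr : (0:ℝ) < 1 + 1 / ρ := by positivity
    nlinarith [mul_le_mul_of_nonneg_left hbsq (le_of_lt hrr)]
  -- step 3 : quadratic growth termwise
  have step3 : ∀ t ∈ Icc 1 T, g t ≤ 2 / lam * (f t (u t) - f t (x t)) := by
    intro t ht
    have htT : t ≤ T := (mem_Icc.mp ht).2
    have hq := hqg t ht (u t) (hu t htT)
    rw [ge_iff_le] at hq
    have e1 : g t = ‖u t - v t‖ ^ 2 := by
      simp only [hg]; rw [hx t ht, norm_sub_rev]
    rw [hx t ht, e1]
    rw [div_mul_eq_mul_div, le_div_iff₀ hlam]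
    nlinarith
  -- sum them
  have S1 : ∑ t ∈ Icc 1 T, 1 / 2 * ‖x t - x (t - 1)‖ ^ 2 ≤
      ∑ t ∈ Icc 1 T, ((1 + ρ) / 2 * ‖u t - u (t - 1)‖ ^ 2 + (1 + 1 / ρ) * (g t + g (t - 1))) :=
    Finset.sum_le_sum step1
  have S2 : ∑ t ∈ Icc 1 T, (g t + g (t - 1)) ≤ 2 * ∑ t ∈ Icc 1 T, g t := by
    have := shift_sum_aux g hg0 T
    have := hgnn T
    linarith
  have S3 : ∑ t ∈ Icc 1 T, g t ≤ 2 / lam * (∑ t ∈ Icc 1 T, f t (u t) - ∑ t ∈ Icc 1 T, f t (x t)) := by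
    calc ∑ t ∈ Icc 1 T, g t ≤ ∑ t ∈ Icc 1 T, 2 / lam * (f t (u t) - f t (x t)) :=
          Finset.sum_le_sum step3
      _ = _ := by rw [← Finset.mul_sum, Finset.sum_sub_distrib]
  rw [Finset.sum_add_distrib] at S1
  rw [← Finset.mul_sum, ← Finset.mul_sum, ← Finset.mul_sum] at S1
  rw [Finset.sum_add_distrib, ← Finset.mul_sum]
  set P := ∑ t ∈ Icc 1 T, f t (x t)
  set U := ∑ t ∈ Icc 1 T, f t (u t)
  set W := ∑ t ∈ Icc 1 T, ‖u t - u (t - 1)‖ ^ 2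
  set G := ∑ t ∈ Icc 1 T, g t
  set H := ∑ t ∈ Icc 1 T, (g t + g (t - 1))
  have hrr : (0:ℝ) ≤ 1 + 1 / ρ := by positivity
  have m2 : (1 + 1 / ρ) * H ≤ (1 + 1 / ρ) * (2 * G) :=
    mul_le_mul_of_nonneg_left S2 hrr
  have m3 : (1 + 1 / ρ) * (2 * G) ≤ (1 + 1 / ρ) * (2 * (2 / lam * (U - P))) :=
    mul_le_mul_of_nonneg_left (by linarith) hrr
  have heq : (1 + 1 / ρ) * (2 * (2 / lam * (U - P))) =
      4 / lam * (1 + 1 / ρ) * U - 4 / lam * (1 + 1 / ρ) * P := by ring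
  have hexp : (1 - 4 / lam * (1 + 1 / ρ)) * P = P - 4 / lam * (1 + 1 / ρ) * P := by ring
  linarith
end
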